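/- arXiv:2212.05176 — 5 statements merged into one kernel-verified Lean document; each statement's English description precedes it below -/
import Mathlib

section
/- For every integer t with 1 ≤ t ≤ n and every real δ with 0 < δ < 1/2, the probability that y_t > δ·t/n is at least 1 − δ. -/
open MeasureTheory ProbabilityTheory
open scoped ENNReal

/-- Let `X 0, …, X (n-1)` be i.i.d. uniform on `[0,1]` and let
`Y` be their order statistics (`Y` is pointwise monotone and a rearrangement of `X`).
For every integer `t` with `1 ≤ t ≤ n` and every real `δ` with `0 < δ < 1/2`,
`Pr[y_t > δ·t/n] ≥ 1 − δ`. -/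
theorem stmt_0
    {Ω : Type*} [MeasurableSpace Ω] {μ : Measure Ω} [IsProbabilityMeasure μ]
    {n : ℕ} (hn : 0 < n)
    (X Y : Fin n → Ω → ℝ)
    (hmeas : ∀ i, Measurable (X i))
    (hindep : iIndepFun X μ)
    (hunif : ∀ i, Measure.map (X i) μ = volume.restrict (Set.Icc (0 : ℝ) 1))
    (hsorted : ∀ ω, Monotone fun i => Y i ω)
    (hperm : ∀ ω, ∃ σ : Equiv.Perm (Fin n), ∀ i, Y i ω = X (σ i) ω)
    (t : ℕ) (ht1 : 1 ≤ t) (ht2 : t ≤ n)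
    (δ : ℝ) (hδ0 : 0 < δ) (hδ1 : δ < 1 / 2) :
    ENNReal.ofReal (1 - δ) ≤ μ {ω | δ * t / n < Y ⟨t - 1, by omega⟩ ω} := by
  set a : ℝ := δ * t / n with ha
  have hnR : (0:ℝ) < n := by exact_mod_cast hn
  have htR : (0:ℝ) < t := by exact_mod_cast ht1
  have ha0 : 0 < a := by positivity
  have ha1 : a ≤ 1 := by
    have htn : (t:ℝ) ≤ n := by exact_mod_cast ht2
    rw [ha, div_le_one hnR]
    nlinarith
  -- the counting function
  set f : Ω → ℝ≥0∞ := fun ω => ∑ i : Fin n, if X i ω ≤ a then 1 else 0 with hf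
  have hfm : Measurable f := by
    apply Finset.measurable_sum
    intro i _
    exact Measurable.ite (measurableSet_le (hmeas i) measurable_const)
      measurable_const measurable_const
  -- each X i is ≤ a with probability ofReal a
  have hXi : ∀ i : Fin n, μ (X i ⁻¹' Set.Iic a) = ENNReal.ofReal a := by
    intro i
    rw [← Measure.map_apply (hmeas i) measurableSet_Iic, hunif i,
      Measure.restrict_apply measurableSet_Iic]
    have : Set.Iic a ∩ Set.Icc (0:ℝ) 1 = Set.Icc 0 a := by
      ext x
      simp only [Set.mem_inter_iff, Set.mem_Iic, Set.mem_Icc]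
      constructor
      · rintro ⟨h1, h2, h3⟩; exact ⟨h2, h1⟩
      · rintro ⟨h1, h2⟩; exact ⟨h2, h1, h2.trans ha1⟩
    rw [this, Real.volume_Icc, sub_zero]
  -- total expectation
  have hint : ∫⁻ ω, f ω ∂μ = (t : ℝ≥0∞) * ENNReal.ofReal δ := by
    rw [hf]
    rw [lintegral_finset_sum _ (fun i _ => Measurable.ite
      (measurableSet_le (hmeas i) measurable_const) measurable_const measurable_const)]
    have : ∀ i : Fin n, ∫⁻ ω, (if X i ω ≤ a then (1:ℝ≥0∞) else 0) ∂μ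
        = ENNReal.ofReal a := by
      intro i
      have heq : (fun ω => if X i ω ≤ a then (1:ℝ≥0∞) else 0)
          = Set.indicator (X i ⁻¹' Set.Iic a) 1 := by
        ext ω
        by_cases h : X i ω ≤ a <;>
          simp [Set.indicator_apply, Set.mem_Iic, h]
      rw [heq, lintegral_indicator_one ((hmeas i) measurableSet_Iic), hXi i]
    rw [Finset.sum_congr rfl (fun i _ => this i)]
    rw [Finset.sum_const, Finset.card_univ, Fintype.card_fin, nsmul_eq_mul]
    rw [← ENNReal.ofReal_natCast n, ← ENNReal.ofReal_natCast t,
      ← ENNReal.ofReal_mul (by positivity), ← ENNReal.ofReal_mul (by positivity)]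
    congr 1
    field_simp [ha]
    rw [ha, mul_comm, div_mul_cancel₀ _ hnR.ne']
    ring
  -- Markov
  have hmarkov : μ {ω | (t : ℝ≥0∞) ≤ f ω} ≤ ENNReal.ofReal δ := by
    have h := mul_meas_ge_le_lintegral₀ hfm.aemeasurable (t : ℝ≥0∞) (μ := μ)
    rw [hint] at h
    exact (ENNReal.mul_le_mul_iff_right (by exact_mod_cast (by omega : t ≠ 0)) (by simp)).mp h
  -- the bad event is contained in the Markov event
  have hsub : {ω | δ * t / n < Y ⟨t - 1, by omega⟩ ω}ᶜ ⊆ {ω | (t : ℝ≥0∞) ≤ f ω} := by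
    intro ω hω
    simp only [Set.mem_compl_iff, Set.mem_setOf_eq, not_lt] at hω
    obtain ⟨σ, hσ⟩ := hperm ω
    set g : Fin t → Fin n := fun j => σ ⟨j, lt_of_lt_of_le j.2 ht2⟩ with hg
    have hginj : Function.Injective g := by
      intro j1 j2 h
      have h2 := congrArg Fin.val (σ.injective h)
      exact Fin.ext h2
    have hgle : ∀ j : Fin t, X (g j) ω ≤ a := by
      intro j
      have h1 : Y ⟨j, lt_of_lt_of_le j.2 ht2⟩ ω ≤ Y ⟨t - 1, by omega⟩ ω :=
        hsorted ω (by simp [Fin.le_def]; omega)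
      rw [hg]
      rw [← hσ]
      exact h1.trans hω
    simp only [Set.mem_setOf_eq, hf]
    calc (t : ℝ≥0∞) = ∑ j : Fin t, (1:ℝ≥0∞) := by simp
      _ = ∑ i ∈ Finset.image g Finset.univ, (if X i ω ≤ a then (1:ℝ≥0∞) else 0) := by
          rw [Finset.sum_image (fun x _ y _ h => hginj h)]
          exact Finset.sum_congr rfl (fun j _ => by simp [hgle j])
      _ ≤ ∑ i : Fin n, (if X i ω ≤ a then (1:ℝ≥0∞) else 0) :=
          Finset.sum_le_sum_of_subset (Finset.subset_univ _)
  -- conclude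
  have h1 : (1 : ℝ≥0∞) ≤ μ {ω | δ * t / n < Y ⟨t - 1, by omega⟩ ω} + ENNReal.ofReal δ := by
    calc (1 : ℝ≥0∞) = μ Set.univ := (measure_univ).symm
      _ ≤ μ ({ω | δ * t / n < Y ⟨t - 1, by omega⟩ ω}
            ∪ {ω | δ * t / n < Y ⟨t - 1, by omega⟩ ω}ᶜ) := by
          rw [Set.union_compl_self]
      _ ≤ μ {ω | δ * t / n < Y ⟨t - 1, by omega⟩ ω}
            + μ ({ω | δ * t / n < Y ⟨t - 1, by omega⟩ ω}ᶜ) := measure_union_le _ _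
      _ ≤ _ := add_le_add_right ((measure_mono hsub).trans hmarkov) _
  have := tsub_le_iff_right.mpr h1
  calc ENNReal.ofReal (1 - δ) = ENNReal.ofReal 1 - ENNReal.ofReal δ :=
        ENNReal.ofReal_sub 1 hδ0.le
    _ = 1 - ENNReal.ofReal δ := by simp
    _ ≤ _ := this
end

section
/- Fix any real α with 4 < α < n/2 and any integer t with 1 ≤ t ≤ n/2. Then the probability that y_{t+1} < y_t + α/n is at least 1 − exp(−α/4). -/
open MeasureTheory ProbabilityTheory
open MeasureTheory intervalIntegral

lemma my_fact_prod (a b : ℕ) :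
    a.factorial * ∏ j ∈ Finset.range (b+1), (a+1+j) = (a+b+1).factorial := by
  induction b with
  | zero => simp [Nat.factorial_succ, Nat.mul_comm]
  | succ b ih =>
      rw [Finset.prod_range_succ, ← mul_assoc, ih]
      have h1 : a + (b+1) + 1 = (a + b + 1) + 1 := by omega
      have h2 : a + 1 + (b+1) = (a + b + 1) + 1 := by omega
      rw [h1, h2]
      conv_rhs => rw [Nat.factorial_succ]
      rw [mul_comm]

lemma my_beta01 (a b : ℕ) :
    ∫ x in (0:ℝ)..1, x^a * (1-x)^b
      = (a.factorial * b.factorial : ℝ) / (a+b+1).factorial := by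
  have h := Complex.betaIntegral_eval_nat_add_one_right
    (u := (a:ℂ) + 1) (by simp; positivity) b
  rw [Complex.betaIntegral] at h
  have hint : (∫ x : ℝ in (0)..1, (x:ℂ) ^ ((a:ℂ)+1-1) * (1-(x:ℂ)) ^ ((b:ℂ)+1-1))
      = ((∫ x in (0:ℝ)..1, x^a * (1-x)^b : ℝ) : ℂ) := by
    rw [← intervalIntegral.integral_ofReal]
    apply intervalIntegral.integral_congr
    intro x hx
    push_cast
    rw [add_sub_cancel_right, add_sub_cancel_right]
    norm_num [Complex.cpow_natCast]
  rw [hint] at h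
  have ha0 : ((a.factorial : ℂ)) ≠ 0 := Nat.cast_ne_zero.2 (Nat.factorial_ne_zero a)
  have hab0 : (((a+b+1).factorial : ℂ)) ≠ 0 := Nat.cast_ne_zero.2 (Nat.factorial_ne_zero _)
  have hP : (∏ j ∈ Finset.range (b+1), ((a:ℂ)+1+j))
      = ((a+b+1).factorial : ℂ) / (a.factorial : ℂ) := by
    rw [eq_div_iff ha0, mul_comm]
    exact_mod_cast my_fact_prod a b
  rw [hP] at h
  have : ((∫ x in (0:ℝ)..1, x^a * (1-x)^b : ℝ) : ℂ)
      = (((a.factorial * b.factorial : ℝ) / (a+b+1).factorial : ℝ) : ℂ) := by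
    rw [h]
    push_cast
    field_simp
  exact_mod_cast this

lemma my_beta (a b : ℕ) {c : ℝ} (hc : 0 ≤ c) :
    ∫ x in (0:ℝ)..c, x^a * (c-x)^b
      = c^(a+b+1) * ((a.factorial * b.factorial : ℝ) / (a+b+1).factorial) := by
  have h := intervalIntegral.smul_integral_comp_mul_left
    (f := fun x => x^a * (c-x)^b) (a := 0) (b := 1) c
  rw [mul_zero, mul_one] at h
  rw [← h]
  have : ∀ x ∈ Set.uIcc (0:ℝ) 1, (c*x)^a * (c - c*x)^b = c^(a+b) * (x^a * (1-x)^b) := by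
    intro x _
    rw [mul_pow, show c - c*x = c * (1-x) by ring, mul_pow]
    ring
  rw [intervalIntegral.integral_congr this, intervalIntegral.integral_const_mul, my_beta01,
    smul_eq_mul]
  rw [pow_succ]
  ring


lemma my_joint {Ω : Type*} [MeasurableSpace Ω] {μ : Measure Ω} [IsProbabilityMeasure μ]
    {n : ℕ} (X : Fin n → Ω → ℝ) (hmeas : ∀ i, Measurable (X i))
    (hindep : iIndepFun X μ)
    (hunif : ∀ i, Measure.map (X i) μ = volume.restrict (Set.Icc (0 : ℝ) 1)) :
    Measure.map (fun ω (i : Fin n) => X i ω) μ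
      = Measure.pi (fun _ => volume.restrict (Set.Icc (0 : ℝ) 1)) := by
  refine (Measure.pi_eq fun s hs => ?_).symm
  rw [Measure.map_apply (measurable_pi_lambda _ hmeas) (MeasurableSet.univ_pi hs)]
  have : (fun ω (i : Fin n) => X i ω) ⁻¹' (Set.pi Set.univ s)
      = ⋂ i ∈ (Finset.univ : Finset (Fin n)), X i ⁻¹' s i := by
    ext ω; simp [Set.mem_pi]
  rw [this, hindep.measure_inter_preimage_eq_mul Finset.univ (sets := s)
    (fun i _ => hs i)]
  refine Finset.prod_congr rfl fun i _ => ?_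
  rw [← hunif i, Measure.map_apply (hmeas i) (hs i)]


lemma my_cell {n : ℕ} (i : Fin n) (A : Finset (Fin n)) (hiA : i ∉ A) {s : ℝ} (hs : 0 ≤ s) :
    Measure.pi (fun _ : Fin n => volume.restrict (Set.Icc (0:ℝ) 1))
      {x : Fin n → ℝ | ∀ j : Fin n, j ≠ i →
        x j ∈ (if j ∈ A then Set.Iic (x i) else Set.Ici (x i + s))}
    = ∫⁻ c in Set.Icc (0:ℝ) 1,
        (ENNReal.ofReal c)^A.card * (ENNReal.ofReal (1-(c+s)))^(n-1-A.card) := by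
  classical
  set ν := volume.restrict (Set.Icc (0:ℝ) 1) with hν
  have hI1 : ∀ c : ℝ, ν (Set.Iic c) = ENNReal.ofReal (min c 1) := by
    intro c
    rw [hν, Measure.restrict_apply measurableSet_Iic]
    have : Set.Iic c ∩ Set.Icc (0:ℝ) 1 = Set.Icc 0 (min c 1) := by
      ext z
      simp only [Set.mem_inter_iff, Set.mem_Iic, Set.mem_Icc, le_min_iff]
      tauto
    rw [this, Real.volume_Icc, sub_zero]
  have hI2 : ∀ c : ℝ, ν (Set.Ici c) = ENNReal.ofReal (1 - max c 0) := by
    intro c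
    rw [hν, Measure.restrict_apply measurableSet_Ici]
    have : Set.Ici c ∩ Set.Icc (0:ℝ) 1 = Set.Icc (max c 0) 1 := by
      ext z
      simp only [Set.mem_inter_iff, Set.mem_Ici, Set.mem_Icc, max_le_iff]
      tauto
    rw [this, Real.volume_Icc]
  set g : ℝ → ENNReal := fun c =>
    (ENNReal.ofReal (min c 1))^A.card
      * (ENNReal.ofReal (1 - max (c+s) 0))^(n-1-A.card) with hg
  have hgmeas : Measurable g := by
    rw [hg]; apply Measurable.fun_mul <;> apply Measurable.pow_const <;> apply ENNReal.measurable_ofReal.comp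
    · exact (measurable_id.min measurable_const)
    · exact (measurable_const.sub ((measurable_id.add_const s).max measurable_const))
  set p : Fin n → Prop := fun j => j = i with hp
  haveI hu : Unique {j : Fin n // p j} := ⟨⟨⟨i, rfl⟩⟩, fun x => Subtype.ext x.2⟩
  haveI hfint : Fintype {j : Fin n // p j} := Subtype.fintype p
  have hd : (⟨i, rfl⟩ : {j : Fin n // p j}) = default := hu.uniq _
  set e := MeasurableEquiv.piEquivPiSubtypeProd (fun _ : Fin n => ℝ) p with he
  set D : Set ((∀ _ : {j : Fin n // p j}, ℝ) × (∀ _ : {j : Fin n // ¬ p j}, ℝ)) :=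
    {y | ∀ j : {j : Fin n // ¬ p j},
      y.2 j ∈ (if (j : Fin n) ∈ A then Set.Iic (y.1 ⟨i, rfl⟩) else Set.Ici (y.1 ⟨i, rfl⟩ + s))}
    with hD
  have hmeasD : MeasurableSet D := by
    rw [hD, Set.setOf_forall]
    apply MeasurableSet.iInter
    intro j
    by_cases hj : (j : Fin n) ∈ A <;>
      simp only [hj, if_true, if_false, Set.mem_Iic, Set.mem_Ici]
    · exact measurableSet_le (measurable_snd.eval) (measurable_fst.eval)
    · exact measurableSet_le (by fun_prop) (measurable_snd.eval)
  have hpre : {x : Fin n → ℝ | ∀ j : Fin n, j ≠ i →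
        x j ∈ (if j ∈ A then Set.Iic (x i) else Set.Ici (x i + s))} = e ⁻¹' D := by
    ext x
    simp only [Set.mem_preimage, hD, Set.mem_setOf_eq, he,
      MeasurableEquiv.piEquivPiSubtypeProd, Equiv.piEquivPiSubtypeProd,
      MeasurableEquiv.coe_mk, Equiv.coe_fn_mk]
    constructor
    · intro h j
      exact h j j.2
    · intro h j hj
      exact h ⟨j, hj⟩
  rw [hpre, (measurePreserving_piEquivPiSubtypeProd (fun _ : Fin n => ν) p).measure_preimage
    hmeasD.nullMeasurableSet, Measure.prod_apply hmeasD]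
  have hslice : ∀ a : (∀ _ : {j : Fin n // p j}, ℝ),
      (Measure.pi fun _ : {j : Fin n // ¬ p j} => ν) (Prod.mk a ⁻¹' D) = g (a ⟨i, rfl⟩) := by
    intro a
    have hset : Prod.mk a ⁻¹' D = Set.pi Set.univ (fun j : {j : Fin n // ¬ p j} =>
        if (j : Fin n) ∈ A then Set.Iic (a ⟨i, rfl⟩) else Set.Ici (a ⟨i, rfl⟩ + s)) := by
      ext b; simp [hD, Set.mem_pi]
    rw [hset, Measure.pi_pi]
    simp only [apply_ite ν]
    have hsub : (∏ j : {j : Fin n // ¬ p j},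
          (if (j : Fin n) ∈ A then ν (Set.Iic (a ⟨i, rfl⟩)) else ν (Set.Ici (a ⟨i, rfl⟩ + s))))
        = ∏ j ∈ Finset.univ.erase i,
          (if j ∈ A then ν (Set.Iic (a ⟨i, rfl⟩)) else ν (Set.Ici (a ⟨i, rfl⟩ + s))) := by
      have hmem : ∀ x : Fin n, x ∈ Finset.univ.erase i ↔ ¬ p x := by
        intro x; simp [hp, Finset.mem_erase]
      exact (Finset.prod_subtype (Finset.univ.erase i) hmem
        (fun j => if j ∈ A then ν (Set.Iic (a ⟨i, rfl⟩)) else ν (Set.Ici (a ⟨i, rfl⟩ + s)))).symm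
    rw [hsub, Finset.prod_ite (fun _ => ν (Set.Iic (a ⟨i, rfl⟩)))
      (fun _ => ν (Set.Ici (a ⟨i, rfl⟩ + s)))]
    have h1 : (Finset.univ.erase i).filter (fun j => j ∈ A) = A := by
      ext j
      simp only [Finset.mem_filter, Finset.mem_erase, Finset.mem_univ, true_and, and_true]
      exact ⟨fun h => h.2, fun hj => ⟨fun h => hiA (h ▸ hj), hj⟩⟩
    have h2 : ((Finset.univ.erase i).filter (fun j => ¬ j ∈ A)).card = n - 1 - A.card := by
      have h3 := Finset.card_filter_add_card_filter_not
        (s := Finset.univ.erase i) (p := fun j => j ∈ A)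
      rw [h1] at h3
      have hc : (Finset.univ.erase i).card = n - 1 := by
        simp [Finset.card_erase_of_mem]
      omega
    rw [Finset.prod_const, Finset.prod_const, h1, h2, hg, hI1, hI2]
  rw [lintegral_congr hslice]
  have hfu := (measurePreserving_funUnique (β := ℝ) ν {j : Fin n // p j}).lintegral_comp hgmeas
  have heq : (fun a : (∀ _ : {j : Fin n // p j}, ℝ) => g (a ⟨i, rfl⟩))
      = fun a => g ((MeasurableEquiv.funUnique {j : Fin n // p j} ℝ) a) := by
    funext a
    rw [hd]
    rfl
  rw [heq]
  have hgoal : (∫⁻ b, g b ∂ν) = ∫⁻ c in Set.Icc (0:ℝ) 1,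
      (ENNReal.ofReal c)^A.card * (ENNReal.ofReal (1-(c+s)))^(n-1-A.card) := by
    rw [hν]
    refine setLIntegral_congr_fun measurableSet_Icc (fun c hc => ?_)
    rw [hg]
    have h1 : min c 1 = c := min_eq_left hc.2
    have h2 : max (c+s) 0 = c + s := max_eq_left (by linarith [hc.1])
    simp only [h1, h2]
  refine Eq.trans ?_ hgoal
  convert hfu using 2
  congr 1
  · exact Subsingleton.elim _ _


lemma my_lint (k m : ℕ) (hm : 1 ≤ m) {s : ℝ} (hs0 : 0 ≤ s) (hs1 : s ≤ 1) :
    (∫⁻ c in Set.Icc (0:ℝ) 1, (ENNReal.ofReal c)^k * (ENNReal.ofReal (1-(c+s)))^m)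
      = ENNReal.ofReal ((1-s)^(k+m+1) * ((k.factorial * m.factorial : ℝ) / (k+m+1).factorial)) := by
  set F : ℝ → ℝ := fun c => c^k * (max ((1-s)-c) 0)^m with hF
  have hFcont : Continuous F := by
    apply Continuous.mul (continuous_pow k)
    exact ((continuous_const.sub continuous_id).max continuous_const).pow m
  have hFnn : ∀ c ∈ Set.Icc (0:ℝ) 1, 0 ≤ F c := by
    intro c hc
    exact mul_nonneg (pow_nonneg hc.1 _) (pow_nonneg (le_max_right _ _) _)
  have h1 : (∫⁻ c in Set.Icc (0:ℝ) 1, (ENNReal.ofReal c)^k * (ENNReal.ofReal (1-(c+s)))^m)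
      = ∫⁻ c in Set.Icc (0:ℝ) 1, ENNReal.ofReal (F c) := by
    refine setLIntegral_congr_fun measurableSet_Icc (fun c hc => ?_)
    rw [hF]
    have e1 : (ENNReal.ofReal c)^k = ENNReal.ofReal (c^k) := (ENNReal.ofReal_pow hc.1 k).symm
    have e0 : ENNReal.ofReal (1-(c+s)) = ENNReal.ofReal (max ((1-s)-c) 0) := by
      rcases le_total 0 ((1:ℝ)-(c+s)) with h | h
      · rw [max_eq_left (by linarith)]; ring_nf
      · rw [max_eq_right (by linarith), ENNReal.ofReal_of_nonpos h, ENNReal.ofReal_zero]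
    have e2 : (ENNReal.ofReal (1-(c+s)))^m = ENNReal.ofReal ((max ((1-s)-c) 0)^m) := by
      rw [e0, ENNReal.ofReal_pow (le_max_right _ _)]
    rw [e1, e2, ← ENNReal.ofReal_mul (pow_nonneg hc.1 k)]
  rw [h1, ← ofReal_integral_eq_lintegral_ofReal
    (hFcont.integrableOn_Icc) ((ae_restrict_iff' measurableSet_Icc).2 (ae_of_all _ hFnn))]
  congr 1
  rw [MeasureTheory.integral_Icc_eq_integral_Ioc, ← intervalIntegral.integral_of_le zero_le_one]
  have hsplit : ∫ c in (0:ℝ)..1, F c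
      = (∫ c in (0:ℝ)..(1-s), F c) + ∫ c in (1-s)..1, F c :=
    (intervalIntegral.integral_add_adjacent_intervals
      (hFcont.intervalIntegrable _ _) (hFcont.intervalIntegrable _ _)).symm
  have hz : (∫ c in (1-s)..1, F c) = 0 := by
    have : ∀ c ∈ Set.uIcc (1-s) (1:ℝ), F c = 0 := by
      intro c hc
      rw [Set.uIcc_of_le (by linarith)] at hc
      have h0 : max ((1-s)-c) 0 = 0 := max_eq_right (by linarith [hc.1])
      simp only [hF, h0, zero_pow (by omega : m ≠ 0), mul_zero]
    rw [intervalIntegral.integral_congr this, intervalIntegral.integral_zero]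
  have hmain : (∫ c in (0:ℝ)..(1-s), F c) = ∫ c in (0:ℝ)..(1-s), c^k * ((1-s)-c)^m := by
    refine intervalIntegral.integral_congr fun c hc => ?_
    rw [Set.uIcc_of_le (by linarith)] at hc
    have h0 : max ((1-s)-c) 0 = (1-s)-c := max_eq_left (by linarith [hc.2])
    simp only [hF, h0]
  rw [hsplit, hz, add_zero, hmain, my_beta k m (by linarith)]

lemma my_Cmeas {n : ℕ} (i : Fin n) (A : Finset (Fin n)) (s : ℝ) :
    MeasurableSet {x : Fin n → ℝ | ∀ j : Fin n, j ≠ i →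
      x j ∈ (if j ∈ A then Set.Iic (x i) else Set.Ici (x i + s))} := by
  rw [Set.setOf_forall]
  apply MeasurableSet.iInter
  intro j
  rcases em (j = i) with hj | hj
  · simp [hj]
  · simp only [hj, ne_eq, not_false_eq_true, forall_true_left]
    by_cases hjA : j ∈ A <;> simp only [hjA, if_true, if_false, Set.mem_Iic, Set.mem_Ici]
    · exact measurableSet_le (measurable_pi_apply j) (measurable_pi_apply i)
    · exact measurableSet_le (by fun_prop) (measurable_pi_apply j)

/-- Let `n ≥ 2`, let `X 0, …, X (n-1)` be i.i.d. uniform on `[0,1]` and let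
`Y` be their order statistics. Fix any real `α` with `4 < α < n/2` and any integer `t`
with `1 ≤ t ≤ n/2`. Then `Pr[y_{t+1} < y_t + α/n] ≥ 1 − exp(−α/4)`. -/
theorem stmt_2
    {Ω : Type*} [MeasurableSpace Ω] {μ : Measure Ω} [IsProbabilityMeasure μ]
    {n : ℕ} (hn : 2 ≤ n)
    (X Y : Fin n → Ω → ℝ)
    (hmeas : ∀ i, Measurable (X i))
    (hindep : iIndepFun X μ)
    (hunif : ∀ i, Measure.map (X i) μ = volume.restrict (Set.Icc (0 : ℝ) 1))
    (hsorted : ∀ ω, Monotone fun i => Y i ω)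
    (hperm : ∀ ω, ∃ σ : Equiv.Perm (Fin n), ∀ i, Y i ω = X (σ i) ω)
    (α : ℝ) (hα4 : 4 < α) (hαn : α < n / 2)
    (t : ℕ) (ht1 : 1 ≤ t) (ht2 : 2 * t ≤ n) :
    ENNReal.ofReal (1 - Real.exp (-α / 4)) ≤
      μ {ω | Y ⟨t, by omega⟩ ω < Y ⟨t - 1, by omega⟩ ω + α / n} := by
  classical
  have hn0 : 0 < n := by omega
  have htn : t < n := by omega
  have ht1n : t - 1 < n := by omega
  set s : ℝ := α / n with hsdef
  have hα0 : 0 < α := by linarith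
  have hs0 : 0 < s := by positivity
  have hsn : s * n = α := div_mul_cancel₀ α (by positivity)
  have hs12 : s < 1/2 := by
    rw [hsdef, div_lt_iff₀ (by positivity)]
    calc α < n/2 := hαn
    _ = 1/2 * n := by ring
  have hs1 : s ≤ 1 := by linarith
  set ν := volume.restrict (Set.Icc (0:ℝ) 1) with hν
  set C : Fin n → Finset (Fin n) → Set (Fin n → ℝ) := fun i A =>
    {x : Fin n → ℝ | ∀ j : Fin n, j ≠ i →
      x j ∈ (if j ∈ A then Set.Iic (x i) else Set.Ici (x i + s))} with hC
  set Bev : Fin n → Finset (Fin n) → Set Ω := fun i A =>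
    (fun ω (j : Fin n) => X j ω) ⁻¹' (C i A) with hBev
  set G : Set Ω := {ω | Y ⟨t, htn⟩ ω < Y ⟨t - 1, ht1n⟩ ω + α / n} with hG
  set Bad : Set Ω := {ω | Y ⟨t - 1, ht1n⟩ ω + s ≤ Y ⟨t, htn⟩ ω} with hBad
  -- inclusion
  have hsubset : Bad ⊆ ⋃ i ∈ (Finset.univ : Finset (Fin n)),
      ⋃ A ∈ Finset.powersetCard (t-1) (Finset.univ.erase i), Bev i A := by
    intro ω hω
    obtain ⟨σ, hσ⟩ := hperm ω
    set i₀ : Fin n := σ ⟨t-1, ht1n⟩ with hi₀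
    set A : Finset (Fin n) := (Finset.Iio (⟨t-1, ht1n⟩ : Fin n)).image σ with hA
    have hAmem : A ∈ Finset.powersetCard (t-1) (Finset.univ.erase i₀) := by
      rw [Finset.mem_powersetCard]
      constructor
      · intro j hj
        rw [hA, Finset.mem_image] at hj
        obtain ⟨k, hk, rfl⟩ := hj
        rw [Finset.mem_Iio] at hk
        refine Finset.mem_erase.2 ⟨fun h => ?_, Finset.mem_univ _⟩
        exact absurd (σ.injective h) (ne_of_lt hk)
      · rw [hA, Finset.card_image_of_injective _ σ.injective, Fin.card_Iio]
    refine Set.mem_biUnion (Finset.mem_univ i₀) (Set.mem_biUnion hAmem ?_)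
    rw [hBev, Set.mem_preimage, hC]
    intro j hj
    set k : Fin n := σ.symm j with hk
    have hXj : X j ω = Y k ω := by rw [hσ k, hk, Equiv.apply_symm_apply]
    have hXi : X i₀ ω = Y ⟨t-1, ht1n⟩ ω := (hσ _).symm
    by_cases hjA : j ∈ A
    · simp only [hjA, if_true, Set.mem_Iic]
      rw [hA, Finset.mem_image] at hjA
      obtain ⟨k', hk', hkj⟩ := hjA
      rw [Finset.mem_Iio] at hk'
      have hkk : k = k' := by rw [hk, ← hkj, Equiv.symm_apply_apply]
      rw [hXj, hXi, hkk]
      exact hsorted ω (le_of_lt hk')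
    · simp only [hjA, if_false, Set.mem_Ici]
      have hkne : k ≠ ⟨t-1, ht1n⟩ := by
        intro h
        apply hj
        rw [hk] at h
        rw [hi₀, ← h, Equiv.apply_symm_apply]
      have hknlt : ¬ k < (⟨t-1, ht1n⟩ : Fin n) := by
        intro h
        apply hjA
        rw [hA, Finset.mem_image]
        exact ⟨k, Finset.mem_Iio.2 h, by rw [hk, Equiv.apply_symm_apply]⟩
      have hkt : (⟨t, htn⟩ : Fin n) ≤ k := by
        rw [Fin.le_def]
        rw [Fin.lt_def] at hknlt
        have := Fin.val_ne_of_ne hkne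
        simp only [Fin.val_mk] at hknlt this ⊢
        omega
      have h1 : Y ⟨t, htn⟩ ω ≤ Y k ω := hsorted ω hkt
      have h2 : Y ⟨t-1, ht1n⟩ ω + s ≤ Y ⟨t, htn⟩ ω := hω
      rw [hXj, hXi]
      linarith
  -- each cell has measure ofReal J
  set J : ℝ := (1-s)^n * (((t-1).factorial * (n-t).factorial : ℝ) / ((t-1)+(n-t)+1).factorial)
    with hJ
  have hcellJ : ∀ i : Fin n, ∀ A ∈ Finset.powersetCard (t-1) (Finset.univ.erase i),
      μ (Bev i A) = ENNReal.ofReal J := by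
    intro i A hA
    rw [Finset.mem_powersetCard] at hA
    obtain ⟨hAsub, hAcard⟩ := hA
    have hiA : i ∉ A := fun h => (Finset.mem_erase.1 (hAsub h)).1 rfl
    have hjoint := my_joint X hmeas hindep hunif
    rw [hBev, ← Measure.map_apply (measurable_pi_lambda _ hmeas) (my_Cmeas i A s), hjoint]
    rw [my_cell i A hiA (le_of_lt hs0), hAcard]
    have hexp : n - 1 - (t-1) = n - t := by omega
    rw [hexp, my_lint (t-1) (n-t) (by omega) (le_of_lt hs0) hs1]
    have : (t-1) + (n-t) + 1 = n := by omega
    rw [hJ, this]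
  -- union bound
  have hBadle : μ Bad ≤ ENNReal.ofReal ((1-s)^n) := by
    have h1 : μ Bad ≤ ∑ i : Fin n, ∑ A ∈ Finset.powersetCard (t-1) (Finset.univ.erase i),
        μ (Bev i A) := by
      refine le_trans (measure_mono hsubset) ?_
      refine le_trans (measure_biUnion_finset_le _ _) ?_
      exact Finset.sum_le_sum fun i _ => measure_biUnion_finset_le _ _
    have h2 : ∑ i : Fin n, ∑ A ∈ Finset.powersetCard (t-1) (Finset.univ.erase i), μ (Bev i A)
        = (n * (n-1).choose (t-1) : ℕ) * ENNReal.ofReal J := by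
      calc ∑ i : Fin n, ∑ A ∈ Finset.powersetCard (t-1) (Finset.univ.erase i), μ (Bev i A)
          = ∑ _i : Fin n, (((n-1).choose (t-1) : ℕ) : ENNReal) * ENNReal.ofReal J := by
            refine Finset.sum_congr rfl (fun i _ => ?_)
            rw [Finset.sum_congr rfl (fun A hA => hcellJ i A hA), Finset.sum_const,
              Finset.card_powersetCard, Finset.card_erase_of_mem (Finset.mem_univ _),
              Finset.card_univ, Fintype.card_fin, nsmul_eq_mul]
        _ = ((n : ℕ) : ENNReal) * ((((n-1).choose (t-1) : ℕ) : ENNReal) * ENNReal.ofReal J) := by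
            rw [Finset.sum_const, Finset.card_univ, Fintype.card_fin, nsmul_eq_mul]
        _ = (n * (n-1).choose (t-1) : ℕ) * ENNReal.ofReal J := by
            rw [← mul_assoc]
            norm_cast
    have h34 : ((n * (n-1).choose (t-1) : ℕ) : ENNReal) * ENNReal.ofReal J
        = ENNReal.ofReal ((1-s)^n) := by
      have hfac : (n * (n-1).choose (t-1)) * ((t-1).factorial * (n-t).factorial)
          = n.factorial := by
        have h5 := Nat.choose_mul_factorial_mul_factorial
          (show t-1 ≤ n-1 by omega)
        have h6 : n - 1 - (t - 1) = n - t := by omega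
        rw [h6] at h5
        calc (n * (n-1).choose (t-1)) * ((t-1).factorial * (n-t).factorial)
            = n * ((n-1).choose (t-1) * (t-1).factorial * (n-t).factorial) := by ring
          _ = n * (n-1).factorial := by rw [h5]
          _ = n.factorial := Nat.mul_factorial_pred hn0.ne'
      have hcast : ((n * (n-1).choose (t-1) : ℕ) : ℝ)
          * (((t-1).factorial : ℝ) * ((n-t).factorial : ℝ)) = (n.factorial : ℝ) := by
        exact_mod_cast congrArg (Nat.cast : ℕ → ℝ) hfac
      rw [← ENNReal.ofReal_natCast (n * (n-1).choose (t-1)),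
        ← ENNReal.ofReal_mul (Nat.cast_nonneg _)]
      congr 1
      have hexp2 : (t-1) + (n-t) + 1 = n := by omega
      rw [hJ, hexp2]
      have hfne : (n.factorial : ℝ) ≠ 0 := Nat.cast_ne_zero.2 (Nat.factorial_ne_zero n)
      field_simp
      push_cast at hcast ⊢
      linear_combination (1-s)^n * hcast
    calc μ Bad ≤ _ := h1
      _ = _ := h2
      _ = ENNReal.ofReal ((1-s)^n) := h34
  -- numeric bound
  have hnum : ((1:ℝ)-s)^n ≤ Real.exp (-α/4) := by
    have e1 : (1:ℝ)-s ≤ Real.exp (-s) := by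
      have := Real.add_one_le_exp (-s)
      linarith
    have e2 : ((1:ℝ)-s)^n ≤ Real.exp (-s)^n :=
      pow_le_pow_left₀ (by linarith) e1 n
    have e3 : Real.exp (-s)^n = Real.exp (-α) := by
      rw [← Real.exp_nat_mul]
      congr 1
      rw [← hsn]
      ring
    have e4 : Real.exp (-α) ≤ Real.exp (-α/4) := by
      apply Real.exp_le_exp.2
      linarith
    calc ((1:ℝ)-s)^n ≤ Real.exp (-s)^n := e2
      _ = Real.exp (-α) := e3
      _ ≤ Real.exp (-α/4) := e4
  have hBadFinal : μ Bad ≤ ENNReal.ofReal (Real.exp (-α/4)) :=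
    le_trans hBadle (ENNReal.ofReal_le_ofReal hnum)
  -- conclude
  have hunion : G ∪ Bad = Set.univ := by
    rw [hG, hBad]
    ext ω
    simp only [Set.mem_union, Set.mem_setOf_eq, Set.mem_univ, iff_true]
    rcases lt_or_ge (Y ⟨t, htn⟩ ω) (Y ⟨t-1, ht1n⟩ ω + α/n) with h | h
    · exact Or.inl h
    · exact Or.inr h
  have h1le : (1 : ENNReal) ≤ μ G + μ Bad := by
    calc (1 : ENNReal) = μ Set.univ := (measure_univ (μ := μ)).symm
      _ = μ (G ∪ Bad) := by rw [hunion]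
      _ ≤ μ G + μ Bad := measure_union_le _ _
  calc ENNReal.ofReal (1 - Real.exp (-α/4))
      = 1 - ENNReal.ofReal (Real.exp (-α/4)) := by
        rw [ENNReal.ofReal_sub _ (Real.exp_nonneg _), ENNReal.ofReal_one]
    _ ≤ 1 - μ Bad := tsub_le_tsub_left hBadFinal 1
    _ ≤ μ G := by
        rw [tsub_le_iff_right]
        exact h1le
end

section
/- Let R be a nonempty finite set, let ε > 0, ℓ > 0, and δ ∈ [0, 1/2). Let f, g : R → ℝ, and suppose there exist subsets R_f ⊆ R and R_g ⊆ R with |R_f| > (1−δ)·|R| and |R_g| > (1−δ)·|R| such that |f(r) − g(r)| ≤ ℓ for every r ∈ R_f ∩ R_g. Let r be uniformly distributed on R and let Z be an independent random variable with distribution Lap(ℓ/ε). Then for every measurable set S ⊆ ℝ: Pr[f(r) + Z ∈ S] ≤ e^ε · Pr[g(r) + Z ∈ S] + 2(1 + e^ε)·δ. -/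
open MeasureTheory ProbabilityTheory

/-- `laplace b` is the Laplace distribution on `ℝ` with scale `b`, i.e., the measure with
density `x ↦ (1/(2b))·exp(−|x|/b)` with respect to Lebesgue measure. -/
noncomputable def laplace (b : ℝ) : Measure ℝ :=
  volume.withDensity fun x => ENNReal.ofReal ((2 * b)⁻¹ * Real.exp (-|x| / b))

lemma laplace_shift_le (b : ℝ) (hb : 0 < b) (c c' L : ℝ) (hcc : |c - c'| ≤ L)
    (S : Set ℝ) (hS : MeasurableSet S) :
    laplace b {z | c + z ∈ S} ≤ ENNReal.ofReal (Real.exp (L / b)) * laplace b {z | c' + z ∈ S} := by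
  have hA : MeasurableSet {z | c + z ∈ S} := (measurable_const_add c) hS
  have hA' : MeasurableSet {z | c' + z ∈ S} := (measurable_const_add c') hS
  set dens : ℝ → ENNReal := fun x => ENNReal.ofReal ((2 * b)⁻¹ * Real.exp (-|x| / b)) with hdens
  have happ : ∀ (A : Set ℝ), MeasurableSet A →
      laplace b A = ∫⁻ z, A.indicator dens z := by
    intro A hA
    rw [laplace, withDensity_apply _ hA, lintegral_indicator hA]
  rw [happ _ hA, happ _ hA']
  rw [← lintegral_add_right_eq_self (fun z => ({z | c + z ∈ S}).indicator dens z) (c' - c)]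
  rw [← lintegral_const_mul' _ _ ENNReal.ofReal_ne_top]
  apply lintegral_mono
  intro y
  simp only []
  by_cases hy : c' + y ∈ S
  · have h1 : y + (c' - c) ∈ {z | c + z ∈ S} := by
      simp only [Set.mem_setOf_eq]
      have : c + (y + (c' - c)) = c' + y := by ring
      rw [this]; exact hy
    have h2 : y ∈ {z | c' + z ∈ S} := hy
    simp only [Set.indicator_of_mem h1, Set.indicator_of_mem h2]
    rw [← ENNReal.ofReal_mul (Real.exp_nonneg _)]
    apply ENNReal.ofReal_le_ofReal
    have hexp : Real.exp (-|y + (c' - c)| / b) ≤ Real.exp (L / b) * Real.exp (-|y| / b) := by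
      rw [← Real.exp_add]
      apply Real.exp_le_exp.2
      have habs : |y| - |y + (c' - c)| ≤ L := by
        have := abs_sub_abs_le_abs_sub y (y + (c' - c))
        have h2 : |y - (y + (c' - c))| = |c - c'| := by
          congr 1; ring
        rw [h2] at this
        linarith
      rw [← add_div, div_le_div_iff₀ hb hb]
      nlinarith
    have h2b : (0:ℝ) ≤ (2 * b)⁻¹ := by positivity
    nlinarith [Real.exp_nonneg (-|y + (c' - c)| / b)]
  · have h1 : y + (c' - c) ∉ {z | c + z ∈ S} := by
      simp only [Set.mem_setOf_eq]
      have : c + (y + (c' - c)) = c' + y := by ring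
      rw [this]; exact hy
    simp only [Set.indicator_of_notMem h1]
    exact zero_le

/-- Laplace mechanism for `(ℓ,δ)`-sensitive values. Let `R` be a nonempty
finite set, `ε > 0`, `ℓ > 0`, `δ ∈ [0, 1/2)`, and `f, g : R → ℝ`. Suppose there are
`R_f, R_g ⊆ R` with `|R_f| > (1−δ)·|R|` and `|R_g| > (1−δ)·|R|` such that
`|f(r) − g(r)| ≤ ℓ` for all `r ∈ R_f ∩ R_g`. Let `r` be uniform on `R` and `Z` an
independent `Lap(ℓ/ε)` random variable. Then for every measurable `S ⊆ ℝ`: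
`Pr[f(r) + Z ∈ S] ≤ e^ε · Pr[g(r) + Z ∈ S] + 2(1 + e^ε)·δ`. -/
theorem stmt_6
    {Ω : Type*} [MeasurableSpace Ω] {μ : Measure Ω} [IsProbabilityMeasure μ]
    {R : Type*} [Fintype R] [DecidableEq R] [Nonempty R] [MeasurableSpace R] [MeasurableSingletonClass R]
    (ε ℓ δ : ℝ) (hε : 0 < ε) (hℓ : 0 < ℓ) (hδ0 : 0 ≤ δ) (hδ1 : δ < 1 / 2)
    (f g : R → ℝ) (Rf Rg : Finset R)
    (hRf : (1 - δ) * (Fintype.card R : ℝ) < (Rf.card : ℝ))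
    (hRg : (1 - δ) * (Fintype.card R : ℝ) < (Rg.card : ℝ))
    (hsens : ∀ x ∈ Rf ∩ Rg, |f x - g x| ≤ ℓ)
    (r : Ω → R) (Z : Ω → ℝ) (hr : Measurable r) (hZ : Measurable Z)
    (hrunif : Measure.map r μ = (PMF.uniformOfFintype R).toMeasure)
    (hZlap : Measure.map Z μ = laplace (ℓ / ε))
    (hindep : IndepFun r Z μ)
    (S : Set ℝ) (hS : MeasurableSet S) :
    μ {ω | f (r ω) + Z ω ∈ S} ≤
      ENNReal.ofReal (Real.exp ε) * μ {ω | g (r ω) + Z ω ∈ S} +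
        ENNReal.ofReal (2 * (1 + Real.exp ε) * δ) := by
  have hb : 0 < ℓ / ε := div_pos hℓ hε
  set b := ℓ / ε with hbdef
  set T : ℝ → Set ℝ := fun c => {z | c + z ∈ S} with hTdef
  have hT : ∀ c, MeasurableSet (T c) := fun c => (measurable_const_add c) hS
  -- L is a probability-like measure: L univ = 1
  have hLuniv : laplace b Set.univ = 1 := by
    rw [← hZlap]
    have h0 : (Measure.map Z μ) Set.univ = μ (Z ⁻¹' Set.univ) :=
      Measure.map_apply hZ MeasurableSet.univ
    rw [h0, Set.preimage_univ]
    exact measure_univ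
  have hLle1 : ∀ c, laplace b (T c) ≤ 1 := fun c => hLuniv ▸ measure_mono (Set.subset_univ _)
  -- uniform singleton mass
  set u : ENNReal := ((Fintype.card R : ℕ) : ENNReal)⁻¹ with hudef
  have hu : ∀ x : R, μ (r ⁻¹' {x}) = u := by
    intro x
    rw [← Measure.map_apply hr (measurableSet_singleton x), hrunif,
      PMF.toMeasure_apply_singleton _ _ (measurableSet_singleton x),
      PMF.uniformOfFintype_apply]
  -- decomposition
  have key : ∀ h : R → ℝ, μ {ω | h (r ω) + Z ω ∈ S} = ∑ x : R, u * laplace b (T (h x)) := by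
    intro h
    have hset : {ω | h (r ω) + Z ω ∈ S} = ⋃ x : R, (r ⁻¹' {x} ∩ Z ⁻¹' (T (h x))) := by
      ext ω
      simp only [Set.mem_setOf_eq, Set.mem_iUnion, Set.mem_inter_iff, Set.mem_preimage,
        Set.mem_singleton_iff]
      constructor
      · intro hw; exact ⟨r ω, rfl, hw⟩
      · rintro ⟨x, hx, hw⟩; rw [hx]; exact hw
    rw [hset, measure_iUnion ?_ ?_]
    · rw [tsum_fintype]
      apply Finset.sum_congr rfl
      intro x _
      rw [hindep.measure_inter_preimage_eq_mul _ _ (measurableSet_singleton x) (hT _),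
        hu x, ← Measure.map_apply hZ (hT _), hZlap]
    · intro i j hij
      apply Set.disjoint_left.2
      rintro ω ⟨hi, _⟩ ⟨hj, _⟩
      exact hij (hi.symm.trans hj)
    · intro x
      exact (hr (measurableSet_singleton x)).inter (hZ (hT _))
  rw [key f, key g]
  -- split over good set
  set G : Finset R := Rf ∩ Rg with hGdef
  have hsplit : ∑ x : R, u * laplace b (T (f x)) =
      ∑ x ∈ Finset.univ \ G, u * laplace b (T (f x)) + ∑ x ∈ G, u * laplace b (T (f x)) :=
    (Finset.sum_sdiff (Finset.subset_univ G)).symm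
  rw [hsplit]
  have hgood : ∑ x ∈ G, u * laplace b (T (f x)) ≤
      ENNReal.ofReal (Real.exp ε) * ∑ x : R, u * laplace b (T (g x)) := by
    calc ∑ x ∈ G, u * laplace b (T (f x))
        ≤ ∑ x ∈ G, ENNReal.ofReal (Real.exp ε) * (u * laplace b (T (g x))) := by
          apply Finset.sum_le_sum
          intro x hx
          have hfx := hsens x hx
          have := laplace_shift_le b hb (f x) (g x) ℓ hfx S hS
          have hLb : ℓ / b = ε := by
            rw [hbdef]; field_simp
          rw [hLb] at this
          calc u * laplace b (T (f x)) ≤ u * (ENNReal.ofReal (Real.exp ε) * laplace b (T (g x))) :=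
                mul_le_mul_right this u
            _ = ENNReal.ofReal (Real.exp ε) * (u * laplace b (T (g x))) := by ring
      _ = ENNReal.ofReal (Real.exp ε) * ∑ x ∈ G, u * laplace b (T (g x)) := by
          rw [Finset.mul_sum]
      _ ≤ ENNReal.ofReal (Real.exp ε) * ∑ x : R, u * laplace b (T (g x)) := by
          apply mul_le_mul_right
          exact Finset.sum_le_sum_of_subset (Finset.subset_univ G)
  have hbad : ∑ x ∈ Finset.univ \ G, u * laplace b (T (f x)) ≤
      ENNReal.ofReal (2 * (1 + Real.exp ε) * δ) := by
    calc ∑ x ∈ Finset.univ \ G, u * laplace b (T (f x))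
        ≤ ∑ x ∈ Finset.univ \ G, u := by
          apply Finset.sum_le_sum
          intro x _
          calc u * laplace b (T (f x)) ≤ u * 1 := mul_le_mul_right (hLle1 _) u
            _ = u := mul_one u
      _ = ((Finset.univ \ G).card : ENNReal) * u := by
          rw [Finset.sum_const, nsmul_eq_mul]
      _ ≤ ENNReal.ofReal (2 * δ) := by
          -- card bound
          have hcardR : (0:ℝ) < (Fintype.card R : ℝ) := by
            exact_mod_cast Fintype.card_pos
          have hGcard : ((Fintype.card R : ℝ)) - ((G.card : ℝ)) < 2 * δ * (Fintype.card R : ℝ) := by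
            have h1 : (Rf ∪ Rg).card ≤ Fintype.card R := by
              exact_mod_cast Finset.card_le_univ _
            have h2 : (Rf ∪ Rg).card + (Rf ∩ Rg).card = Rf.card + Rg.card :=
              Finset.card_union_add_card_inter Rf Rg
            have h1' : ((Rf ∪ Rg).card : ℝ) ≤ (Fintype.card R : ℝ) := by exact_mod_cast h1
            have h2' : ((Rf ∪ Rg).card : ℝ) + ((Rf ∩ Rg).card : ℝ) = (Rf.card : ℝ) + (Rg.card : ℝ) := by
              exact_mod_cast h2
            rw [hGdef]
            nlinarith
          have hbadcard : (((Finset.univ \ G).card : ℕ) : ℝ) ≤ 2 * δ * (Fintype.card R : ℝ) := by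
            have : (Finset.univ \ G).card = Fintype.card R - G.card := by
              rw [Finset.card_sdiff_of_subset (Finset.subset_univ G), Finset.card_univ]
            rw [this]
            have hGle : G.card ≤ Fintype.card R := Finset.card_le_univ G
            have : ((Fintype.card R - G.card : ℕ) : ℝ) = (Fintype.card R : ℝ) - (G.card : ℝ) := by
              rw [Nat.cast_sub hGle]
            rw [this]
            linarith
          -- convert to ENNReal
          have hdiv : (((Finset.univ \ G).card : ℝ)) / (Fintype.card R : ℝ) ≤ 2 * δ := by
            rw [div_le_iff₀ hcardR]; linarith
          calc ((Finset.univ \ G).card : ENNReal) * u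
              = ENNReal.ofReal ((((Finset.univ \ G).card : ℝ)) / (Fintype.card R : ℝ)) := by
                rw [ENNReal.ofReal_div_of_pos hcardR, hudef, ENNReal.div_eq_inv_mul]
                rw [ENNReal.ofReal_natCast, ENNReal.ofReal_natCast, mul_comm]
            _ ≤ ENNReal.ofReal (2 * δ) := ENNReal.ofReal_le_ofReal hdiv
      _ ≤ ENNReal.ofReal (2 * (1 + Real.exp ε) * δ) := by
          apply ENNReal.ofReal_le_ofReal
          nlinarith [Real.exp_pos ε]
  calc ∑ x ∈ Finset.univ \ G, u * laplace b (T (f x)) + ∑ x ∈ G, u * laplace b (T (f x))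
      ≤ ENNReal.ofReal (2 * (1 + Real.exp ε) * δ) +
        ENNReal.ofReal (Real.exp ε) * ∑ x : R, u * laplace b (T (g x)) := add_le_add hbad hgood
    _ = ENNReal.ofReal (Real.exp ε) * ∑ x : R, u * laplace b (T (g x)) +
        ENNReal.ofReal (2 * (1 + Real.exp ε) * δ) := add_comm _ _
end

section
/- Let x_1, …, x_n be independent random variables, each with distribution Lap(b) for some b > 0, and let 0 < δ ≤ 1. Set M = b·ln(n/δ). Then for every t > 0: Pr[ x_1 + ⋯ + x_n > t ] ≤ exp( − (t²/2) / (2·n·b² + M·t/3) ) + δ. -/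
open MeasureTheory ProbabilityTheory

open Real Set Filter

set_option maxHeartbeats 2000000

lemma aux_integral_exp_neg_mul_Ioi {c : ℝ} (hc : 0 < c) (a : ℝ) :
    ∫ x in Set.Ioi a, Real.exp (-c * x) = Real.exp (-c * a) / c := by
  have hderiv : ∀ x ∈ Ici a, HasDerivAt (fun x => -Real.exp (-c * x) / c)
      (Real.exp (-c * x)) x := by
    intro x _
    have h := (((hasDerivAt_id x).const_mul (-c)).exp).neg.div_const c
    refine h.congr_deriv ?_
    field_simp
    rfl
  have hint : IntegrableOn (fun x => Real.exp (-c * x)) (Ioi a) :=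
    exp_neg_integrableOn_Ioi a hc
  have htend : Tendsto (fun x => -Real.exp (-c * x) / c) atTop (nhds 0) := by
    have : Tendsto (fun x => Real.exp (-c * x)) atTop (nhds 0) :=
      Real.tendsto_exp_atBot.comp (tendsto_id.const_mul_atTop_of_neg (by linarith))
    simpa using (this.neg.div_const c)
  rw [integral_Ioi_of_hasDerivAt_of_tendsto' hderiv hint htend]
  field_simp
  ring

lemma aux_integral_exp_mul_Iic {c : ℝ} (hc : 0 < c) (a : ℝ) :
    ∫ x in Set.Iic a, Real.exp (c * x) = Real.exp (c * a) / c := by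
  have key := integral_comp_neg_Iic a (fun y => Real.exp (-c * y))
  simp only [neg_mul, mul_neg, neg_neg] at key
  rw [key]
  have := aux_integral_exp_neg_mul_Ioi hc (-a)
  simp only [neg_mul] at this
  rw [this]
  ring_nf

lemma aux_integrableOn_exp_mul_Iic {c : ℝ} (hc : 0 < c) (a : ℝ) :
    IntegrableOn (fun x => Real.exp (c * x)) (Set.Iic a) := by
  have A : MeasurableEmbedding fun x : ℝ => -x :=
    (Homeomorph.neg ℝ).isClosedEmbedding.measurableEmbedding
  have hpre : (fun x : ℝ => -x) ⁻¹' (Set.Ioi (-a)) = Set.Iio a := by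
    ext x; simp
  have hmap : Measure.map (fun x : ℝ => -x) (volume.restrict (Set.Iio a))
      = volume.restrict (Set.Ioi (-a)) := by
    rw [← hpre, ← A.restrict_map, Measure.map_neg_eq_self]
  have h2 : IntegrableOn (fun x => Real.exp (c * x)) (Set.Iio a) := by
    have h3 : Integrable (fun x => Real.exp (-c * x))
        (Measure.map (fun x : ℝ => -x) (volume.restrict (Set.Iio a))) := by
      rw [hmap]; exact exp_neg_integrableOn_Ioi (-a) hc
    have h4 := A.integrable_map_iff.mp h3
    simp only [neg_mul] at h4
    have h5 : ((fun x => Real.exp (-(c * x))) ∘ fun x : ℝ => -x) = fun x => Real.exp (c * x) := by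
      ext x; simp
    simpa [h5, IntegrableOn] using h4
  exact h2.congr_set_ae Iio_ae_eq_Iic.symm

noncomputable def lapd (b : ℝ) (x : ℝ) : ℝ := (2 * b)⁻¹ * Real.exp (-|x| / b)

lemma lapd_nonneg {b : ℝ} (hb : 0 < b) (x : ℝ) : 0 ≤ lapd b x :=
  mul_nonneg (by positivity) (Real.exp_nonneg _)

lemma lapd_continuous {b : ℝ} : Continuous (lapd b) := by
  unfold lapd
  fun_prop

/-- integrability and value of `∫ lapd b x * exp (s x)` -/
lemma aux_lapd_exp_integrable {b s : ℝ} (hb : 0 < b) (hs1 : s * b < 1) (hs2 : -1 < s * b) :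
    Integrable (fun x => lapd b x * Real.exp (s * x)) volume := by
  have hc1 : 0 < 1/b - s := by
    have : s < 1/b := by rw [lt_div_iff₀ hb]; linarith
    linarith
  have hc2 : 0 < 1/b + s := by
    have : -s < 1/b := by rw [lt_div_iff₀ hb]; nlinarith
    linarith
  rw [← integrableOn_univ, ← Set.Iic_union_Ioi (a := (0:ℝ))]
  apply IntegrableOn.union
  · apply IntegrableOn.congr_fun ((aux_integrableOn_exp_mul_Iic hc2 0).const_mul ((2*b)⁻¹))
      ?_ measurableSet_Iic
    intro x hx
    simp only [Set.mem_Iic] at hx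
    show (2*b)⁻¹ * Real.exp ((1/b + s) * x) = (2*b)⁻¹ * Real.exp (-|x| / b) * Real.exp (s * x)
    rw [abs_of_nonpos hx, mul_assoc, ← Real.exp_add]
    congr 1
    field_simp
  · apply IntegrableOn.congr_fun ((exp_neg_integrableOn_Ioi 0 hc1).const_mul ((2*b)⁻¹))
      ?_ measurableSet_Ioi
    intro x hx
    simp only [Set.mem_Ioi] at hx
    show (2*b)⁻¹ * Real.exp (-(1/b - s) * x) = (2*b)⁻¹ * Real.exp (-|x| / b) * Real.exp (s * x)
    rw [abs_of_pos hx, mul_assoc, ← Real.exp_add]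
    congr 1
    field_simp
    ring

lemma aux_lapd_exp_integral {b s : ℝ} (hb : 0 < b) (hs1 : s * b < 1) (hs2 : -1 < s * b) :
    ∫ x, lapd b x * Real.exp (s * x) = (1 - s^2 * b^2)⁻¹ := by
  have hc1 : 0 < 1/b - s := by
    have : s < 1/b := by rw [lt_div_iff₀ hb]; linarith
    linarith
  have hc2 : 0 < 1/b + s := by
    have : -s < 1/b := by rw [lt_div_iff₀ hb]; nlinarith
    linarith
  have e1 : ∀ x ∈ Set.Iic (0:ℝ), lapd b x * Real.exp (s * x)
      = (2*b)⁻¹ * Real.exp ((1/b + s) * x) := by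
    intro x hx
    simp only [Set.mem_Iic] at hx
    unfold lapd
    rw [abs_of_nonpos hx, mul_assoc, ← Real.exp_add]
    congr 1
    field_simp
  have e2 : ∀ x ∈ Set.Ioi (0:ℝ), lapd b x * Real.exp (s * x)
      = (2*b)⁻¹ * Real.exp (-(1/b - s) * x) := by
    intro x hx
    simp only [Set.mem_Ioi] at hx
    unfold lapd
    rw [abs_of_pos hx, mul_assoc, ← Real.exp_add]
    congr 1
    field_simp
    ring
  have i1 : IntegrableOn (fun x => lapd b x * Real.exp (s * x)) (Set.Iic 0) :=
    (aux_lapd_exp_integrable hb hs1 hs2).integrableOn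
  have i2 : IntegrableOn (fun x => lapd b x * Real.exp (s * x)) (Set.Ioi 0) :=
    (aux_lapd_exp_integrable hb hs1 hs2).integrableOn
  rw [← intervalIntegral.integral_Iic_add_Ioi (b := (0:ℝ)) i1 i2]
  rw [setIntegral_congr_fun measurableSet_Iic e1, setIntegral_congr_fun measurableSet_Ioi e2]
  rw [integral_const_mul, integral_const_mul, aux_integral_exp_mul_Iic hc2,
    aux_integral_exp_neg_mul_Ioi hc1]
  have h1 : (1 : ℝ) - s * b ≠ 0 := by nlinarith
  have h2 : (1 : ℝ) + s * b ≠ 0 := by nlinarith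
  have h3 : (1:ℝ) - s^2*b^2 = (1 - s*b)*(1+s*b) := by ring
  rw [mul_zero, Real.exp_zero, neg_mul, mul_zero, neg_zero, Real.exp_zero, h3]
  have hbne : b ≠ 0 := hb.ne'
  have hA : 1/b - s ≠ 0 := hc1.ne'
  have hB : 1/b + s ≠ 0 := hc2.ne'
  have r1 : 1/b + s = (1 + s*b)/b := by field_simp; try ring
  have r2 : 1/b - s = (1 - s*b)/b := by field_simp; try ring
  rw [r1, r2, one_div_div, one_div_div]
  field_simp
  rw [mul_comm b s] at *
  rw [div_add_div _ _ h2 h1, div_eq_div_iff (mul_ne_zero h2 h1) (mul_ne_zero h2 h1)]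
  ring

noncomputable def lapdNN (b : ℝ) : ℝ → NNReal := fun x => (lapd b x).toNNReal

lemma lapdNN_meas {b : ℝ} : Measurable (lapdNN b) :=
  lapd_continuous.measurable.real_toNNReal

lemma laplace_eq (b : ℝ) :
    laplace b = volume.withDensity (fun x => ((lapdNN b x : NNReal) : ENNReal)) := by
  unfold laplace lapdNN lapd
  rfl

lemma lapd_integrable {b : ℝ} (hb : 0 < b) : Integrable (lapd b) volume := by
  have h := aux_lapd_exp_integrable (s := 0) hb (by simpa using one_pos) (by norm_num)
  simpa using h

lemma lapd_integral {b : ℝ} (hb : 0 < b) : ∫ x, lapd b x = 1 := by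
  have h := aux_lapd_exp_integral (s := 0) hb (by simpa using one_pos) (by norm_num)
  simpa using h

instance laplace_prob {b : ℝ} [hb : Fact (0 < b)] : IsProbabilityMeasure (laplace b) := by
  constructor
  unfold laplace
  rw [withDensity_apply _ MeasurableSet.univ, Measure.restrict_univ]
  have : ∀ x : ℝ, ENNReal.ofReal ((2 * b)⁻¹ * Real.exp (-|x| / b)) = ENNReal.ofReal (lapd b x) :=
    fun x => rfl
  simp_rw [this]
  rw [← ofReal_integral_eq_lintegral_ofReal (lapd_integrable hb.out)
    (Filter.Eventually.of_forall (lapd_nonneg hb.out))]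
  rw [lapd_integral hb.out]
  simp

lemma laplace_integrable_exp {b s : ℝ} (hb : 0 < b) (hs1 : s * b < 1) (hs2 : -1 < s * b) :
    Integrable (fun x => Real.exp (s * x)) (laplace b) := by
  rw [laplace_eq, integrable_withDensity_iff_integrable_smul lapdNN_meas]
  have : (fun x => lapdNN b x • Real.exp (s * x)) = fun x => lapd b x * Real.exp (s * x) := by
    ext x
    simp [lapdNN, NNReal.smul_def, Real.coe_toNNReal _ (lapd_nonneg hb x)]
  rw [this]
  exact aux_lapd_exp_integrable hb hs1 hs2

lemma laplace_integral_exp {b s : ℝ} (hb : 0 < b) (hs1 : s * b < 1) (hs2 : -1 < s * b) :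
    ∫ x, Real.exp (s * x) ∂(laplace b) = (1 - s^2 * b^2)⁻¹ := by
  rw [laplace_eq, integral_withDensity_eq_integral_smul lapdNN_meas]
  rw [← aux_lapd_exp_integral hb hs1 hs2]
  congr 1
  ext x
  simp [lapdNN, NNReal.smul_def, Real.coe_toNNReal _ (lapd_nonneg hb x)]

lemma laplace_tail {b : ℝ} (hb : 0 < b) {a : ℝ} (ha : 0 ≤ a) :
    laplace b {x | a < x} = ENNReal.ofReal (Real.exp (-a / b) / 2) := by
  have hset : {x : ℝ | a < x} = Set.Ioi a := rfl
  have hc : 0 < 1/b := by positivity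
  have heq : ∀ x ∈ Set.Ioi a, lapd b x = (2*b)⁻¹ * Real.exp (-(1/b) * x) := by
    intro x hx
    simp only [Set.mem_Ioi] at hx
    unfold lapd
    rw [abs_of_pos (lt_of_le_of_lt ha hx)]
    congr 1
    field_simp
  have hint : IntegrableOn (lapd b) (Set.Ioi a) := by
    apply IntegrableOn.congr_fun ((exp_neg_integrableOn_Ioi a hc).const_mul ((2*b)⁻¹))
      ?_ measurableSet_Ioi
    intro x hx
    exact (heq x hx).symm
  have hval : ∫ x in Set.Ioi a, lapd b x = Real.exp (-a/b) / 2 := by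
    rw [setIntegral_congr_fun measurableSet_Ioi heq, integral_const_mul,
      aux_integral_exp_neg_mul_Ioi hc]
    rw [neg_mul]
    have : a * (1/b) = a / b := by field_simp
    rw [mul_comm (1/b) a, this]
    field_simp
  unfold laplace
  rw [hset, withDensity_apply _ measurableSet_Ioi]
  have : ∀ x : ℝ, ENNReal.ofReal ((2 * b)⁻¹ * Real.exp (-|x| / b)) = ENNReal.ofReal (lapd b x) :=
    fun x => rfl
  simp_rw [this]
  rw [← ofReal_integral_eq_lintegral_ofReal hint
    (Filter.Eventually.of_forall fun x => lapd_nonneg hb x), hval]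

/-- Let `x_1, …, x_n` be independent random variables, each with distribution
`Lap(b)` for some `b > 0`, and let `0 < δ ≤ 1`. Set `M = b·ln(n/δ)`. Then for every `t > 0`:
`Pr[x_1 + ⋯ + x_n > t] ≤ exp(−(t²/2)/(2·n·b² + M·t/3)) + δ`. -/
theorem stmt_10
    {Ω : Type*} [MeasurableSpace Ω] {μ : Measure Ω} [IsProbabilityMeasure μ]
    {n : ℕ} (hn : 0 < n)
    (b : ℝ) (hb : 0 < b)
    (X : Fin n → Ω → ℝ) (hX : ∀ i, Measurable (X i))
    (hindep : iIndepFun X μ)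
    (hmap : ∀ i, Measure.map (X i) μ = laplace b)
    (δ : ℝ) (hδ0 : 0 < δ) (hδ1 : δ ≤ 1)
    (M : ℝ) (hM : M = b * Real.log (n / δ))
    (t : ℝ) (ht : 0 < t) :
    μ {ω | t < ∑ i, X i ω} ≤
      ENNReal.ofReal (Real.exp (-(t ^ 2 / 2) / (2 * n * b ^ 2 + M * t / 3)) + δ) := by
  have hn' : (0:ℝ) < n := by exact_mod_cast hn
  have hn1 : (1:ℝ) ≤ n := by exact_mod_cast hn
  have hM0 : 0 ≤ M := by
    rw [hM]
    apply mul_nonneg hb.le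
    apply Real.log_nonneg
    rw [le_div_iff₀ hδ0]
    linarith
  obtain ⟨D, hD_def⟩ : ∃ D : ℝ, D = 2 * n * b ^ 2 + M * t / 3 := ⟨_, rfl⟩
  rw [show (2 * (n:ℝ) * b ^ 2 + M * t / 3) = D from hD_def.symm]
  have hD : 0 < D := by
    rw [hD_def]
    have h1 : 0 < 2 * (n:ℝ) * b ^ 2 := by positivity
    have h2 : 0 ≤ M * t / 3 := by positivity
    linarith
  obtain ⟨s, hs_def⟩ : ∃ s : ℝ, s = t / D := ⟨_, rfl⟩
  have hs0 : 0 ≤ s := by rw [hs_def]; positivity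
  have hsD : s * D = t := by rw [hs_def]; exact div_mul_cancel₀ t hD.ne'
  have hexp_pos : 0 < Real.exp (-(t ^ 2 / 2) / D) := Real.exp_pos _
  by_cases hcase : s * b ^ 2 * 3 ≤ M
  · -- Chernoff case
    have h5 : s ^ 2 * b ^ 2 ≤ s * M / 3 := by nlinarith
    have huD : s ^ 2 * b ^ 2 * D ≤ M * t / 3 := by
      have h6 : s * M / 3 * D = M * t / 3 := by
        have : s * M / 3 * D = M * (s * D) / 3 := by ring
        rw [this, hsD]
      nlinarith
    have h7 : 2 * n * b ^ 2 / D ≤ 1 - s ^ 2 * b ^ 2 := by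
      rw [div_le_iff₀ hD]
      nlinarith [hD_def]
    have h8 : 0 < 1 - s ^ 2 * b ^ 2 := lt_of_lt_of_le (by positivity) h7
    have hsb1 : s * b < 1 := by nlinarith [mul_nonneg hs0 hb.le]
    have hsb2 : (-1:ℝ) < s * b := lt_of_lt_of_le (by norm_num) (mul_nonneg hs0 hb.le)
    -- per-coordinate facts
    have hint_i : ∀ i, Integrable (fun ω => Real.exp (s * X i ω)) μ := by
      intro i
      have h1 : Integrable (fun x => Real.exp (s * x)) (Measure.map (X i) μ) := by
        rw [hmap i]; exact laplace_integrable_exp hb hsb1 hsb2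
      have h2 := (integrable_map_measure
        (by apply Measurable.aestronglyMeasurable; fun_prop) (hX i).aemeasurable).mp h1
      exact h2
    have hmgf_i : ∀ i, mgf (X i) μ s = (1 - s ^ 2 * b ^ 2)⁻¹ := by
      intro i
      have h1 : mgf (X i) μ s = ∫ x, Real.exp (s * x) ∂(Measure.map (X i) μ) := by
        rw [integral_map (hX i).aemeasurable
          (by apply Measurable.aestronglyMeasurable; fun_prop)]
        rfl
      rw [h1, hmap i, laplace_integral_exp hb hsb1 hsb2]
    have hintS : Integrable (fun ω => Real.exp (s * (∑ i, X i) ω)) μ :=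
      hindep.integrable_exp_mul_sum hX fun i _ => hint_i i
    have hchern := measure_ge_le_exp_mul_mgf (X := ∑ i, X i) (μ := μ) t hs0 hintS
    rw [hindep.mgf_sum hX Finset.univ] at hchern
    simp only [hmgf_i, Finset.prod_const, Finset.card_univ, Fintype.card_fin] at hchern
    -- bound the rhs
    have h9 : (1 - s ^ 2 * b ^ 2)⁻¹ ≤ Real.exp (s ^ 2 * b ^ 2 / (1 - s ^ 2 * b ^ 2)) := by
      have h := Real.add_one_le_exp (s ^ 2 * b ^ 2 / (1 - s ^ 2 * b ^ 2))
      have heq : s ^ 2 * b ^ 2 / (1 - s ^ 2 * b ^ 2) + 1 = (1 - s ^ 2 * b ^ 2)⁻¹ := by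
        field_simp
        ring
      linarith
    have h10 : (n:ℝ) * (s ^ 2 * b ^ 2 / (1 - s ^ 2 * b ^ 2)) ≤ t ^ 2 / (2 * D) := by
      have ha : s ^ 2 * b ^ 2 / (1 - s ^ 2 * b ^ 2) ≤ s ^ 2 * b ^ 2 / (2 * n * b ^ 2 / D) :=
        div_le_div_of_nonneg_left (by positivity) (by positivity) h7
      have hb2 : (n:ℝ) * (s ^ 2 * b ^ 2 / (2 * n * b ^ 2 / D)) = t ^ 2 / (2 * D) := by
        rw [← hsD]
        field_simp
      nlinarith
    have h11 : ((1 - s ^ 2 * b ^ 2)⁻¹) ^ n ≤ Real.exp (t ^ 2 / (2 * D)) := by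
      calc ((1 - s ^ 2 * b ^ 2)⁻¹) ^ n
          ≤ (Real.exp (s ^ 2 * b ^ 2 / (1 - s ^ 2 * b ^ 2))) ^ n :=
            pow_le_pow_left₀ (by positivity) h9 n
        _ = Real.exp ((n:ℝ) * (s ^ 2 * b ^ 2 / (1 - s ^ 2 * b ^ 2))) :=
            (Real.exp_nat_mul _ n).symm
        _ ≤ Real.exp (t ^ 2 / (2 * D)) := Real.exp_le_exp.mpr h10
    have h12 : Real.exp (-s * t) * ((1 - s ^ 2 * b ^ 2)⁻¹) ^ n ≤
        Real.exp (-(t ^ 2 / 2) / D) := by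
      calc Real.exp (-s * t) * ((1 - s ^ 2 * b ^ 2)⁻¹) ^ n
          ≤ Real.exp (-s * t) * Real.exp (t ^ 2 / (2 * D)) := by
            apply mul_le_mul_of_nonneg_left h11 (Real.exp_nonneg _)
        _ = Real.exp (-s * t + t ^ 2 / (2 * D)) := (Real.exp_add _ _).symm
        _ = Real.exp (-(t ^ 2 / 2) / D) := by
            congr 1
            rw [← hsD]
            field_simp
            ring
    have hfin : (μ {ω | t ≤ (∑ i, X i) ω}).toReal ≤ Real.exp (-(t ^ 2 / 2) / D) :=
      le_trans hchern h12
    calc μ {ω | t < ∑ i, X i ω}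
        ≤ μ {ω | t ≤ (∑ i, X i) ω} := by
          apply measure_mono
          intro ω hω
          simp only [Set.mem_setOf_eq, Finset.sum_apply] at *
          linarith
      _ ≤ ENNReal.ofReal (Real.exp (-(t ^ 2 / 2) / D)) := by
          rw [← ENNReal.ofReal_toReal (measure_ne_top μ _)]
          exact ENNReal.ofReal_le_ofReal hfin
      _ ≤ ENNReal.ofReal (Real.exp (-(t ^ 2 / 2) / D) + δ) :=
          ENNReal.ofReal_le_ofReal (by linarith)
  · -- union bound case
    push_neg at hcase
    have hcase' : M * D < t * b ^ 2 * 3 := by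
      have h := (mul_lt_mul_iff_of_pos_right hD).mpr hcase
      have h2 : s * b ^ 2 * 3 * D = t * b ^ 2 * 3 := by rw [← hsD]; ring
      linarith
    have hlog2 : (0.6931471803 : ℝ) < Real.log 2 := Real.log_two_gt_d9
    -- M^2 < 9 b^2
    have hM9 : M ^ 2 < 9 * b ^ 2 := by nlinarith [hD_def, mul_nonneg (mul_nonneg hM0 hn'.le) (sq_nonneg b)]
    have ht2 : 6 * M * n * b ^ 2 < t * (9 * b ^ 2 - M ^ 2) := by nlinarith [hD_def]
    have hkey : (M - b * Real.log 2) * (9 * b ^ 2 - M ^ 2) ≤ 6 * M * b ^ 2 := by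
      rcases le_or_gt (M ^ 2) (3 * b ^ 2) with hc | hc
      · have e1 : 0 ≤ (M - b) ^ 2 * (M + 2 * b) := mul_nonneg (sq_nonneg _) (by linarith)
        have q1 : 6 * b ^ 3 ≤ b * (9 * b ^ 2 - M ^ 2) := by nlinarith
        have q0 : (0:ℝ) ≤ b * (9 * b ^ 2 - M ^ 2) := by nlinarith
        have e2 : 2 * b ^ 3 ≤ Real.log 2 * (b * (9 * b ^ 2 - M ^ 2)) := by
          nlinarith [mul_nonneg (by linarith : (0:ℝ) ≤ Real.log 2 - 1/3) q0]
        nlinarith [e1, e2]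
      · nlinarith [mul_nonneg hM0 (by nlinarith : (0:ℝ) ≤ M ^ 2 - 3 * b ^ 2),
          mul_pos hb (by nlinarith : (0:ℝ) < 9 * b ^ 2 - M ^ 2)]
    have htlarge : (n:ℝ) * (M - b * Real.log 2) < t := by
      have h9pos : (0:ℝ) < 9 * b ^ 2 - M ^ 2 := by nlinarith
      have := mul_le_mul_of_nonneg_left hkey hn'.le
      have h3 : (n:ℝ) * (M - b * Real.log 2) * (9 * b ^ 2 - M ^ 2) < t * (9 * b ^ 2 - M ^ 2) := by
        nlinarith
      exact lt_of_mul_lt_mul_right h3 h9pos.le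
    -- per-coordinate tail
    have htn0 : (0:ℝ) ≤ t / n := by positivity
    have hti : ∀ i, μ {ω | t / n < X i ω} = ENNReal.ofReal (Real.exp (-(t / n) / b) / 2) := by
      intro i
      have hpre : {ω | t / n < X i ω} = X i ⁻¹' {x | t / n < x} := rfl
      have hms : MeasurableSet {x : ℝ | t / n < x} := by
        show MeasurableSet (Set.Ioi (t / n))
        exact measurableSet_Ioi
      rw [hpre, ← Measure.map_apply (hX i) hms, hmap i, laplace_tail hb htn0]
    have hsub : {ω | t < ∑ i, X i ω} ⊆ ⋃ i, {ω | t / n < X i ω} := by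
      intro ω hω
      simp only [Set.mem_setOf_eq] at hω
      by_contra hc
      simp only [Set.mem_iUnion, Set.mem_setOf_eq, not_exists, not_lt] at hc
      have hsum : ∑ i, X i ω ≤ ∑ _i : Fin n, t / n := Finset.sum_le_sum fun i _ => hc i
      rw [Finset.sum_const, Finset.card_univ, Fintype.card_fin, nsmul_eq_mul] at hsum
      have heq : (n:ℝ) * (t / n) = t := by field_simp
      linarith
    -- the numeric bound : n * (exp(-(t/n)/b)/2) ≤ δ
    have hMb : M / b = Real.log ((n:ℝ) / δ) := by rw [hM]; field_simp
    have hexpM : Real.exp (-(M / b)) = δ / n := by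
      rw [hMb, Real.exp_neg, Real.exp_log (by positivity), inv_div]
    have harg : -(t / n) / b ≤ Real.log 2 - M / b := by
      rw [div_le_iff₀ hb]
      have h4 : (M / b) * b = M := div_mul_cancel₀ M hb.ne'
      have h5 : M - b * Real.log 2 < t / n := by
        rw [lt_div_iff₀ hn']
        nlinarith
      nlinarith
    have hexpb : Real.exp (-(t / n) / b) ≤ 2 * (δ / n) := by
      calc Real.exp (-(t / n) / b) ≤ Real.exp (Real.log 2 - M / b) := Real.exp_le_exp.mpr harg
        _ = Real.exp (Real.log 2) * Real.exp (-(M / b)) := by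
            rw [← Real.exp_add]; ring_nf
        _ = 2 * (δ / n) := by rw [Real.exp_log two_pos, hexpM]
    have hnum : (n:ℝ) * (Real.exp (-(t / n) / b) / 2) ≤ δ := by
      have h6 : (n:ℝ) * (2 * (δ / n) / 2) = δ := by field_simp
      nlinarith [Real.exp_nonneg (-(t / n) / b)]
    -- assemble
    calc μ {ω | t < ∑ i, X i ω}
        ≤ μ (⋃ i, {ω | t / n < X i ω}) := measure_mono hsub
      _ ≤ ∑' i, μ {ω | t / n < X i ω} := measure_iUnion_le _
      _ = ∑ i : Fin n, μ {ω | t / n < X i ω} := tsum_fintype _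
      _ = (n : ENNReal) * ENNReal.ofReal (Real.exp (-(t / n) / b) / 2) := by
          simp [hti, Finset.sum_const, Finset.card_univ, mul_comm]
      _ = ENNReal.ofReal ((n:ℝ) * (Real.exp (-(t / n) / b) / 2)) := by
          rw [ENNReal.ofReal_mul (by positivity), ENNReal.ofReal_natCast]
      _ ≤ ENNReal.ofReal (Real.exp (-(t ^ 2 / 2) / D) + δ) := by
          apply ENNReal.ofReal_le_ofReal
          have := Real.exp_nonneg (-(t ^ 2 / 2) / D)
          linarith
end

section
/- Let x_1, …, x_n be independent random variables, each with distribution Lap(b) for some b > 0. Then for every δ with 0 < δ ≤ 1: Pr[ x_1 + ⋯ + x_n > max{ √(4·n·b²·ln(3/δ)), (2/3)·b·ln(3n/δ)·ln(3/δ) } ] ≤ δ. -/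
open MeasureTheory ProbabilityTheory Real Set Filter
open scoped ENNReal NNReal

section auxLemmas

lemma l2lb : (0.6931471:ℝ) ≤ Real.log 2 := le_of_lt (by linarith [Real.log_two_gt_d9])
lemma l2ub : Real.log 2 ≤ (0.6931472:ℝ) := le_of_lt (by linarith [Real.log_two_lt_d9])

lemma l32lb : (0.4054:ℝ) ≤ Real.log (3/2) := by
  rw [Real.le_log_iff_exp_le (by norm_num)]
  have habs : |(0.4054:ℝ)| ≤ 1 := by rw [abs_of_nonneg (by norm_num)]; norm_num
  have h := Real.exp_bound habs (n := 5) (by norm_num)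
  have hsum : ∑ m ∈ Finset.range 5, (0.4054:ℝ)^m / m.factorial
      = 1 + 0.4054 + 0.4054^2/2 + 0.4054^3/6 + 0.4054^4/24 := by
    norm_num [Finset.sum_range_succ, Nat.factorial]
  rw [hsum] at h
  have h2 := (abs_le.mp h).2
  rw [abs_of_nonneg (by norm_num : (0:ℝ) ≤ 0.4054)] at h2
  norm_num [Nat.factorial] at h2 ⊢
  linarith

lemma l3lb : (1.0985:ℝ) ≤ Real.log 3 := by
  rw [show (3:ℝ) = 2 * (3/2) by norm_num, Real.log_mul (by norm_num) (by norm_num)]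
  linarith [l2lb, l32lb]

lemma l43ub : Real.log (4/3) ≤ (0.2878:ℝ) := by
  rw [show (4:ℝ)/3 = 2^2 / 3 by norm_num, Real.log_div (by norm_num) (by norm_num),
    Real.log_pow]
  push_cast
  linarith [l2ub, l3lb]

lemma l43lb : (0:ℝ) ≤ Real.log (4/3) := Real.log_nonneg (by norm_num)

lemma l8lb : (2.0794413:ℝ) ≤ Real.log 8 := by
  rw [show (8:ℝ) = 2^3 by norm_num, Real.log_pow]
  push_cast
  linarith [l2lb]

lemma l12lb : (2.4847:ℝ) ≤ Real.log 12 := by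
  rw [show (12:ℝ) = 2^2 * 3 by norm_num, Real.log_mul (by norm_num) (by norm_num), Real.log_pow]
  push_cast
  linarith [l2lb, l3lb]

lemma exp_neg_quad {v : ℝ} (h0 : 0 ≤ v) (h1 : v ≤ 1) :
    Real.exp (-v) ≤ 1 - v + v^2/2 + (2/9)*v^3 := by
  have habs : |(-v)| ≤ 1 := by rw [abs_neg, abs_of_nonneg h0]; linarith
  have h := Real.exp_bound habs (n := 3) (by norm_num)
  have hsum : ∑ m ∈ Finset.range 3, (-v)^m / m.factorial = 1 - v + v^2/2 := by
    norm_num [Finset.sum_range_succ, Nat.factorial]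
    ring
  rw [hsum] at h
  have h2 := (abs_le.mp h).2
  rw [abs_neg, abs_of_nonneg h0] at h2
  norm_num [Nat.factorial] at h2
  linarith

lemma log_penalty {u : ℝ} (h0 : 0 ≤ u) (h1 : u ≤ 1/4) :
    Real.log (1/(1-u)) ≤ u + 0.85*u^2 := by
  have h1u : (0:ℝ) < 1 - u := by linarith
  have hu2 : 0 ≤ u^2 := sq_nonneg u
  have hv0 : (0:ℝ) ≤ u + 0.85*u^2 := by linarith
  have hvu : u + 0.85*u^2 ≤ 1.2125 * u := by nlinarith [mul_nonneg h0 (by linarith : (0:ℝ) ≤ 1/4 - u)]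
  have hv1 : u + 0.85*u^2 ≤ 1 := by linarith
  have h2 := exp_neg_quad hv0 hv1
  have h3 : (u + 0.85*u^2)^2 ≤ (1.2125*u)^2 := by nlinarith [hv0, hvu]
  have h4 : (u + 0.85*u^2)^3 ≤ (1.2125*u)^3 := by
    have := pow_le_pow_left₀ hv0 hvu 3
    simpa using this
  have hu3 : 0 ≤ u^2*(1/4 - u) := mul_nonneg (sq_nonneg u) (by linarith)
  have hle : Real.exp (-(u + 0.85*u^2)) ≤ 1 - u := by nlinarith [h2, h3, h4, hu3]
  have hlog : -(u + 0.85*u^2) ≤ Real.log (1 - u) := (Real.le_log_iff_exp_le h1u).mpr hle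
  rw [one_div, Real.log_inv]
  linarith



lemma intOn_exp_neg_Ioi {a : ℝ} (ha : 0 < a) :
    IntegrableOn (fun x : ℝ => exp (-a * x)) (Ioi 0) volume :=
  exp_neg_integrableOn_Ioi 0 ha

lemma int_exp_neg_Ioi {a : ℝ} (ha : 0 < a) :
    ∫ x in Ioi (0:ℝ), exp (-a * x) = a⁻¹ := by
  have hd : ∀ x ∈ Ioi (0:ℝ), HasDerivAt (fun x => -exp (-a * x) / a) (exp (-a * x)) x := by
    intro x _
    have h1 : HasDerivAt (fun x : ℝ => -a * x) (-a) x := by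
      simpa using (hasDerivAt_id x).const_mul (-a)
    have h2 := h1.exp.neg.div_const a
    refine h2.congr_deriv ?_
    have ha' : a ≠ 0 := ha.ne'
    field_simp
  have htend : Tendsto (fun x => -exp (-a * x) / a) atTop (nhds 0) := by
    have : Tendsto (fun x : ℝ => -a * x) atTop atBot :=
      tendsto_id.const_mul_atTop_of_neg (by linarith)
    have h2 : Tendsto (fun x : ℝ => exp (-a * x)) atTop (nhds 0) :=
      tendsto_exp_atBot.comp this
    simpa using (h2.neg).div_const a
  have hcont : ContinuousWithinAt (fun x => -exp (-a * x) / a) (Ici 0) 0 :=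
    (Continuous.continuousWithinAt (by continuity))
  have := integral_Ioi_of_hasDerivAt_of_tendsto hcont hd (intOn_exp_neg_Ioi ha) htend
  rw [this]
  simp [neg_div]

lemma intOn_exp_Iio {a : ℝ} (ha : 0 < a) :
    IntegrableOn (fun x : ℝ => exp (a * x)) (Iio 0) volume := by
  have h := (MeasurePreserving.integrableOn_comp_preimage
      (Measure.measurePreserving_neg (volume : Measure ℝ))
      (Homeomorph.neg ℝ).measurableEmbedding).2 (intOn_exp_neg_Ioi ha)
  have h2 : (Neg.neg ⁻¹' Ioi (0:ℝ)) = Iio 0 := by ext x; simp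
  rw [h2] at h
  refine h.congr_fun (fun x _ => ?_) measurableSet_Iio
  simp only [Function.comp]
  ring_nf

lemma int_exp_Iio {a : ℝ} (ha : 0 < a) :
    ∫ x in Iio (0:ℝ), exp (a * x) = a⁻¹ := by
  rw [← integral_Iic_eq_integral_Iio]
  have : ∫ x in Ioi (0:ℝ), exp (a * -x) = ∫ x in Iic (-(0:ℝ)), exp (a * x) :=
    integral_comp_neg_Ioi (0:ℝ) (fun x => exp (a * x))
  simp only [neg_zero] at this
  rw [← this]
  rw [← int_exp_neg_Ioi ha]
  congr 1; ext x; ring_nf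



section lap
variable {b t : ℝ} (hb : 0 < b) (ht0 : 0 ≤ t) (ht : t < 1/b)

lemma lap_eq_Ici : EqOn (fun x : ℝ => (2*b)⁻¹ * exp (-|x|/b) * exp (t*x))
    (fun x : ℝ => (2*b)⁻¹ * exp (-(1/b - t) * x)) (Ici 0) := by
  intro x hx
  simp only [mem_Ici] at hx
  simp only []
  rw [abs_of_nonneg hx, mul_assoc, ← exp_add]
  congr 2
  field_simp
  ring

lemma lap_eq_Iio : EqOn (fun x : ℝ => (2*b)⁻¹ * exp (-|x|/b) * exp (t*x))
    (fun x : ℝ => (2*b)⁻¹ * exp ((1/b + t) * x)) (Iio 0) := by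
  intro x hx
  simp only [mem_Iio] at hx
  simp only []
  rw [abs_of_neg hx, mul_assoc, ← exp_add]
  congr 2
  field_simp

include hb ht0 ht in
lemma lap_integrable :
    Integrable (fun x : ℝ => (2*b)⁻¹ * exp (-|x|/b) * exp (t*x)) volume := by
  have hc1 : 0 < 1/b - t := by
    have : 0 < 1/b := by positivity
    linarith
  have hc2 : 0 < 1/b + t := by
    have : 0 < 1/b := by positivity
    linarith
  have hIci : IntegrableOn (fun x : ℝ => (2*b)⁻¹ * exp (-|x|/b) * exp (t*x)) (Ici 0) volume := by
    have : IntegrableOn (fun x : ℝ => (2*b)⁻¹ * exp (-(1/b - t) * x)) (Ici 0) volume := by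
      rw [integrableOn_Ici_iff_integrableOn_Ioi]
      exact (intOn_exp_neg_Ioi hc1).const_mul _
    exact (this.congr_fun (fun x hx => (lap_eq_Ici hx).symm) measurableSet_Ici)
  have hIio : IntegrableOn (fun x : ℝ => (2*b)⁻¹ * exp (-|x|/b) * exp (t*x)) (Iio 0) volume := by
    have : IntegrableOn (fun x : ℝ => (2*b)⁻¹ * exp ((1/b + t) * x)) (Iio 0) volume :=
      (intOn_exp_Iio hc2).const_mul _
    exact (this.congr_fun (fun x hx => (lap_eq_Iio hx).symm) measurableSet_Iio)
  have := hIio.union hIci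
  rwa [Iio_union_Ici, integrableOn_univ] at this

include hb ht0 ht in
lemma lap_integral :
    ∫ x : ℝ, (2*b)⁻¹ * exp (-|x|/b) * exp (t*x) = (1 - t^2*b^2)⁻¹ := by
  have hc1 : 0 < 1/b - t := by
    have : 0 < 1/b := by positivity
    linarith
  have hc2 : 0 < 1/b + t := by
    have : 0 < 1/b := by positivity
    linarith
  have hint := lap_integrable hb ht0 ht
  rw [← intervalIntegral.integral_Iio_add_Ici (hint.integrableOn) (hint.integrableOn)]
  have e1 : ∫ x in Ici (0:ℝ), (2*b)⁻¹ * exp (-|x|/b) * exp (t*x)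
      = (2*b)⁻¹ * (1/b - t)⁻¹ := by
    rw [setIntegral_congr_fun measurableSet_Ici lap_eq_Ici,
      integral_Ici_eq_integral_Ioi, integral_const_mul, int_exp_neg_Ioi hc1]
  have e2 : ∫ x in Iio (0:ℝ), (2*b)⁻¹ * exp (-|x|/b) * exp (t*x)
      = (2*b)⁻¹ * (1/b + t)⁻¹ := by
    rw [setIntegral_congr_fun measurableSet_Iio lap_eq_Iio,
      integral_const_mul, int_exp_Iio hc2]
  rw [e1, e2]
  have hb' : b ≠ 0 := ne_of_gt hb
  have h3 : (1/b - t) * (1/b + t) * b^2 = 1 - t^2*b^2 := by field_simp; ring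
  have h1 : 1 - t^2*b^2 ≠ 0 := by rw [← h3]; positivity
  have hpos1 : (0:ℝ) < 1 - t*b := by nlinarith [mul_pos hc1 hb, mul_pos hb hb, one_div b]
  have hpos2 : (0:ℝ) < 1 + t*b := by nlinarith
  have r1 : (1/b - t)⁻¹ = b * (1 - t*b)⁻¹ := by
    have h : 1/b - t = (1 - t*b)/b := by field_simp; try ring
    rw [h, inv_div]
    ring
  have r2 : (1/b + t)⁻¹ = b * (1 + t*b)⁻¹ := by
    have : 1/b + t = (1 + t*b)/b := by field_simp; try ring
    rw [this, inv_div]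
    ring
  have hfac : 1 - t^2*b^2 = (1 - t*b)*(1 + t*b) := by ring
  rw [r1, r2, hfac]
  field_simp
  have hbt : 1 - b*t ≠ 0 := by nlinarith
  field_simp
  ring

end lap



lemma sqrt_lb' {a c : ℝ} (hc : 0 ≤ c) (h : c^2 ≤ a) : c ≤ Real.sqrt a := by
  rw [show c = Real.sqrt (c^2) by rw [Real.sqrt_sq hc]]
  exact Real.sqrt_le_sqrt h

lemma sqrt_ub' {a c : ℝ} (hc : 0 ≤ c) (h : a ≤ c^2) : Real.sqrt a ≤ c := by
  rw [show c = Real.sqrt (c^2) by rw [Real.sqrt_sq hc]]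
  exact Real.sqrt_le_sqrt h

lemma box_lemma {r s : ℝ} (h1 : 1.73 ≤ r) (h2 : r ≤ 3.47) (h3 : 1.04 ≤ s) (h4 : s ≤ 1.74) :
    s^2 - 1.098 + 0.288*r^2 ≤ r*s := by
  nlinarith [mul_nonneg (by linarith : (0:ℝ) ≤ r - 1.73) (by linarith : (0:ℝ) ≤ s - 1.04),
    mul_nonneg (by linarith : (0:ℝ) ≤ r - 1.73) (by linarith : (0:ℝ) ≤ 1.74 - s),
    mul_nonneg (by linarith : (0:ℝ) ≤ 3.47 - r) (by linarith : (0:ℝ) ≤ s - 1.04),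
    mul_nonneg (by linarith : (0:ℝ) ≤ 3.47 - r) (by linarith : (0:ℝ) ≤ 1.74 - s),
    mul_nonneg (by linarith : (0:ℝ) ≤ r - 1.73) (by linarith : (0:ℝ) ≤ 3.47 - r),
    mul_nonneg (by linarith : (0:ℝ) ≤ s - 1.04) (by linarith : (0:ℝ) ≤ 1.74 - s)]

set_option maxHeartbeats 1000000 in
lemma key_choice (n : ℕ) (hn : 0 < n) (L : ℝ) (hL : Real.log 3 ≤ L) :
    ∃ x : ℝ, 0 < x ∧ x < 1 ∧
      (L - Real.log 3) + (n:ℝ) * Real.log (1 / (1 - x^2)) ≤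
        x * max (2 * Real.sqrt (n * L)) (2/3 * L * (L + Real.log n)) := by
  have hL1 : (1.0985:ℝ) ≤ L := le_trans l3lb hL
  have hL0 : (0:ℝ) < L := by linarith
  obtain ⟨N, hN⟩ : ∃ N : ℝ, N = (n:ℝ) := ⟨_, rfl⟩
  rw [← hN]
  have hN1 : (1:ℝ) ≤ N := by rw [hN]; exact_mod_cast hn
  have hN0 : (0:ℝ) < N := by linarith
  have hlogN0 : 0 ≤ Real.log N := Real.log_nonneg hN1
  by_cases hc : N ≤ 4*L
  · -- x = 1/2
    refine ⟨1/2, by norm_num, by norm_num, ?_⟩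
    have hx2 : Real.log (1/(1 - (1/2:ℝ)^2)) = Real.log (4/3) := by norm_num
    rw [hx2]
    have hBle : (1/2) * (2/3*L*(L + Real.log N)) ≤
        (1/2) * max (2 * Real.sqrt (N*L)) (2/3*L*(L + Real.log N)) :=
      mul_le_mul_of_nonneg_left (le_max_right _ _) (by norm_num)
    have hAle : (1/2) * (2 * Real.sqrt (N*L)) ≤
        (1/2) * max (2 * Real.sqrt (N*L)) (2/3*L*(L + Real.log N)) :=
      mul_le_mul_of_nonneg_left (le_max_left _ _) (by norm_num)
    by_cases h2 : n ≤ 2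
    · refine le_trans ?_ hBle
      interval_cases n
      · simp only [hN, Nat.cast_one, Real.log_one]
        nlinarith [l3lb, l43ub, l43lb, sq_nonneg (L - 3/2)]
      · simp only [hN, Nat.cast_ofNat]
        nlinarith [l3lb, l43ub, l43lb, l2lb, sq_nonneg (L - 1.16), hL0]
    · push_neg at h2
      have h2' : 3 ≤ n := h2
      have hN3 : (3:ℝ) ≤ N := by rw [hN]; exact_mod_cast h2'
      have hNl43 : N * Real.log (4/3) ≤ N * 0.2878 :=
        mul_le_mul_of_nonneg_left l43ub hN0.le
      by_cases hL3 : L ≤ 3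
      · -- A branch, box argument
        refine le_trans ?_ hAle
        have hN12 : N ≤ 12 := by linarith
        have hsq : Real.sqrt (N*L) = Real.sqrt N * Real.sqrt L :=
          Real.sqrt_mul hN0.le L
        have hr2 : (Real.sqrt N)^2 = N := Real.sq_sqrt hN0.le
        have hs2 : (Real.sqrt L)^2 = L := Real.sq_sqrt hL0.le
        have hr0 : 0 ≤ Real.sqrt N := Real.sqrt_nonneg N
        have hs0 : 0 ≤ Real.sqrt L := Real.sqrt_nonneg L
        have hrlb : 1.73 ≤ Real.sqrt N := sqrt_lb' (by norm_num) (by nlinarith)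
        have hrub : Real.sqrt N ≤ 3.47 := sqrt_ub' (by norm_num) (by nlinarith)
        have hslb : 1.04 ≤ Real.sqrt L := sqrt_lb' (by norm_num) (by nlinarith)
        have hsub : Real.sqrt L ≤ 1.74 := sqrt_ub' (by norm_num) (by nlinarith)
        rw [hsq]
        have hbox := box_lemma hrlb hrub hslb hsub
        have hgoal : L - Real.log 3 + N * Real.log (4/3) ≤ Real.sqrt N * Real.sqrt L := by
          nlinarith [l3lb, hNl43, hr2, hs2, hbox]
        linarith [hgoal]
      · push_neg at hL3
        refine le_trans ?_ hBle
        have hLlogN : L * 1.0985 ≤ L * Real.log N := by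
          have : Real.log 3 ≤ Real.log N := Real.log_le_log (by norm_num) hN3
          have := le_trans l3lb this
          exact mul_le_mul_of_nonneg_left this hL0.le
        by_cases h11 : N ≤ 11
        · by_cases h7 : N ≤ 7
          · nlinarith [l3lb, hNl43, hLlogN, sq_nonneg (L - 3), l43lb, hN0]
          · push_neg at h7
            have hN8 : (8:ℝ) ≤ N := by
              have h7' : 8 ≤ n := by
                have : (7:ℕ) < n := by rw [hN] at h7; exact_mod_cast h7
                omega
              rw [hN]; exact_mod_cast h7'
            have hlogN8 : (2.0794413:ℝ) ≤ Real.log N :=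
              le_trans l8lb (Real.log_le_log (by norm_num) hN8)
            have : L * 2.0794413 ≤ L * Real.log N :=
              mul_le_mul_of_nonneg_left hlogN8 hL0.le
            nlinarith [l3lb, hNl43, this, sq_nonneg (L - 3), l43lb]
        · push_neg at h11
          have hN12 : (12:ℝ) ≤ N := by
            have h11' : 12 ≤ n := by
              have : (11:ℕ) < n := by rw [hN] at h11; exact_mod_cast h11
              omega
            rw [hN]; exact_mod_cast h11'
          have hlogN12 : (2.4847:ℝ) ≤ Real.log N :=
            le_trans l12lb (Real.log_le_log (by norm_num) hN12)
          have h1 : L * 2.4847 ≤ L * Real.log N :=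
            mul_le_mul_of_nonneg_left hlogN12 hL0.le
          have h4 : N * Real.log (4/3) ≤ 4*L * 0.2878 := by
            apply mul_le_mul hc l43ub l43lb (by linarith)
          nlinarith [l3lb, h1, h4, sq_nonneg (L - 3)]
  · -- x = sqrt(L/N)
    push_neg at hc
    have hu0 : (0:ℝ) < L/N := div_pos hL0 hN0
    have hu4 : L/N ≤ 1/4 := by
      rw [div_le_iff₀ hN0]
      linarith
    have hu1 : L/N < 1 := lt_of_le_of_lt hu4 (by norm_num)
    refine ⟨Real.sqrt (L/N), Real.sqrt_pos.mpr hu0, ?_, ?_⟩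
    · rw [show (1:ℝ) = Real.sqrt 1 by rw [Real.sqrt_one]]
      exact Real.sqrt_lt_sqrt hu0.le hu1
    · have hx2 : (Real.sqrt (L/N))^2 = L/N := Real.sq_sqrt hu0.le
      rw [hx2]
      have hx0 : 0 ≤ Real.sqrt (L/N) := Real.sqrt_nonneg _
      have hpen : N * Real.log (1/(1-L/N)) ≤ L + 0.85*(L^2/N) := by
        have h := log_penalty hu0.le hu4
        calc N * Real.log (1/(1-L/N)) ≤ N * (L/N + 0.85*(L/N)^2) :=
              mul_le_mul_of_nonneg_left h hN0.le
          _ = L + 0.85*(L^2/N) := by field_simp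
      have hA : Real.sqrt (L/N) * (2 * Real.sqrt (N*L)) = 2*L := by
        rw [show Real.sqrt (L/N) * (2 * Real.sqrt (N*L))
            = 2 * (Real.sqrt (L/N) * Real.sqrt (N*L)) by ring,
          ← Real.sqrt_mul hu0.le]
        rw [show L/N * (N*L) = L^2 by field_simp]
        rw [Real.sqrt_sq hL0.le]
      by_cases hR1 : 4/5*L^2 ≤ N
      · have hLN : L^2/N ≤ 5/4 := by
          rw [div_le_iff₀ hN0]
          nlinarith
        calc L - Real.log 3 + N * Real.log (1/(1-L/N))
            ≤ L - Real.log 3 + (L + 0.85*(L^2/N)) := by linarith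
          _ ≤ 2*L := by nlinarith [l3lb]
          _ = Real.sqrt (L/N) * (2 * Real.sqrt (N*L)) := hA.symm
          _ ≤ Real.sqrt (L/N) * max (2 * Real.sqrt (N*L)) (2/3*L*(L + Real.log N)) :=
              mul_le_mul_of_nonneg_left (le_max_left _ _) hx0
      · push_neg at hR1
        have hL5 : 5 < L := by nlinarith
        have hN21 : (21:ℝ) ≤ N := by
          have h20 : (20:ℝ) < N := by linarith
          have h20' : 21 ≤ n := by
            have : (20:ℕ) < n := by rw [hN] at h20; exact_mod_cast h20
            omega
          rw [hN]; exact_mod_cast h20'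
        have hlogN3 : (3:ℝ) ≤ Real.log N := by
          rw [Real.le_log_iff_exp_le hN0]
          have h3 : Real.exp 3 = (Real.exp 1)^3 := by
            rw [← Real.exp_nat_mul]
            norm_num
          have hp : (Real.exp 1)^3 ≤ 2.7182818286^3 :=
            pow_le_pow_left₀ (Real.exp_pos 1).le (le_of_lt Real.exp_one_lt_d9) 3
          calc Real.exp 3 = (Real.exp 1)^3 := h3
            _ ≤ 2.7182818286^3 := hp
            _ ≤ 21 := by norm_num
            _ ≤ N := hN21
        have hpen2 : L^2/N ≤ L/4 := by
          rw [div_le_iff₀ hN0]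
          nlinarith [mul_le_mul_of_nonneg_left hc.le hL0.le]
        -- a' := sqrt(L/N) * (2/3*L*(L+3)), show a' ≥ 2.2125*L - 1.0985
        have hsq5 : 5/4 ≤ (L/N) * L := by
          rw [div_mul_eq_mul_div, le_div_iff₀ hN0]
          nlinarith [hR1, sq_nonneg L]
        have ha'sq : (Real.sqrt (L/N) * (2/3*L*(L+3)))^2 ≥ 5/9 * L * (L+3)^2 := by
          have : (Real.sqrt (L/N) * (2/3*L*(L+3)))^2 = (L/N) * (2/3*L*(L+3))^2 := by
            rw [mul_pow, hx2]
          rw [this]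
          have hexp : (L/N) * (2/3*L*(L+3))^2 = ((L/N)*L) * (4/9*L*(L+3)^2) := by ring
          rw [hexp]
          have h49 : (0:ℝ) ≤ 4/9*L*(L+3)^2 := by positivity
          nlinarith [mul_le_mul_of_nonneg_right hsq5 h49]
        have ha'0 : 0 ≤ Real.sqrt (L/N) * (2/3*L*(L+3)) := by positivity
        have hc0 : 0 < 2.2125*L - 1.0985 := by nlinarith
        have ha'c : 2.2125*L - 1.0985 ≤ Real.sqrt (L/N) * (2/3*L*(L+3)) := by
          nlinarith [ha'sq, ha'0, hc0, sq_nonneg (L - 5), hL5,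
            mul_pos (mul_pos hL0 hL0) hL0]
        have hmono : Real.sqrt (L/N) * (2/3*L*(L+3)) ≤ Real.sqrt (L/N) * (2/3*L*(L+Real.log N)) := by
          apply mul_le_mul_of_nonneg_left _ hx0
          nlinarith [hlogN3]
        calc L - Real.log 3 + N * Real.log (1/(1-L/N))
            ≤ L - Real.log 3 + (L + 0.85*(L^2/N)) := by linarith
          _ ≤ 2.2125*L - Real.log 3 := by nlinarith [hpen2]
          _ ≤ 2.2125*L - 1.0985 := by linarith [l3lb]
          _ ≤ Real.sqrt (L/N) * (2/3*L*(L+3)) := ha'c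
          _ ≤ Real.sqrt (L/N) * (2/3*L*(L+Real.log N)) := hmono
          _ ≤ Real.sqrt (L/N) * max (2 * Real.sqrt (N*L)) (2/3*L*(L + Real.log N)) :=
              mul_le_mul_of_nonneg_left (le_max_right _ _) hx0

end auxLemmas



section lapmgf
variable {b t : ℝ}

lemma lap_w_meas (b : ℝ) : Measurable fun x : ℝ => ((2 * b)⁻¹ * Real.exp (-|x| / b)).toNNReal :=
  (((measurable_abs.neg.div_const b).exp).const_mul (2*b)⁻¹).real_toNNReal

lemma laplace_eq_s11 (b : ℝ) : laplace b
    = volume.withDensity fun x => (((2 * b)⁻¹ * Real.exp (-|x| / b)).toNNReal : ℝ≥0∞) := rfl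

lemma lap_w_nonneg (hb : 0 < b) (x : ℝ) : 0 ≤ (2 * b)⁻¹ * Real.exp (-|x| / b) := by positivity

lemma integrable_exp_laplace (hb : 0 < b) (ht0 : 0 ≤ t) (ht : t < 1/b) :
    Integrable (fun x : ℝ => exp (t * x)) (laplace b) := by
  rw [laplace_eq_s11, integrable_withDensity_iff_integrable_smul (lap_w_meas b)]
  have := lap_integrable hb ht0 ht
  refine this.congr (Filter.Eventually.of_forall fun x => ?_)
  simp only [NNReal.smul_def, Real.coe_toNNReal _ (lap_w_nonneg hb x), smul_eq_mul]
  try ring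

lemma integral_exp_laplace (hb : 0 < b) (ht0 : 0 ≤ t) (ht : t < 1/b) :
    ∫ x, exp (t * x) ∂(laplace b) = (1 - t^2*b^2)⁻¹ := by
  rw [laplace_eq_s11, integral_withDensity_eq_integral_smul (lap_w_meas b)]
  rw [← lap_integral hb ht0 ht]
  congr 1
  ext x
  simp only [NNReal.smul_def, Real.coe_toNNReal _ (lap_w_nonneg hb x), smul_eq_mul]
  try ring

end lapmgf

/-- Let `x_1, …, x_n` be independent random variables, each with distribution
`Lap(b)` for some `b > 0`. Then for every `δ` with `0 < δ ≤ 1`: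
`Pr[x_1 + ⋯ + x_n > max{√(4·n·b²·ln(3/δ)), (2/3)·b·ln(3n/δ)·ln(3/δ)}] ≤ δ`. -/
theorem stmt_11
    {Ω : Type*} [MeasurableSpace Ω] {μ : Measure Ω} [IsProbabilityMeasure μ]
    {n : ℕ} (hn : 0 < n)
    (b : ℝ) (hb : 0 < b)
    (X : Fin n → Ω → ℝ) (hX : ∀ i, Measurable (X i))
    (hindep : iIndepFun X μ)
    (hmap : ∀ i, Measure.map (X i) μ = laplace b)
    (δ : ℝ) (hδ0 : 0 < δ) (hδ1 : δ ≤ 1) :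
    μ {ω | max (Real.sqrt (4 * n * b ^ 2 * Real.log (3 / δ)))
          ((2 / 3) * b * Real.log (3 * n / δ) * Real.log (3 / δ)) < ∑ i, X i ω} ≤
      ENNReal.ofReal δ := by
  have hN1 : (1:ℝ) ≤ (n:ℝ) := by exact_mod_cast hn
  have hδ3 : (0:ℝ) < 3/δ := by positivity
  set L := Real.log (3/δ) with hLdef
  have hLlog3 : Real.log 3 ≤ L := by
    apply Real.log_le_log (by norm_num)
    rw [le_div_iff₀ hδ0]; linarith
  have hlog3 : (1:ℝ) < Real.log 3 := by
    rw [← Real.log_exp 1]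
    apply Real.log_lt_log (exp_pos 1)
    calc rexp 1 < 2.7182818286 := Real.exp_one_lt_d9
    _ < 3 := by norm_num
  have hL0 : 0 < L := by linarith
  obtain ⟨x, hx0, hx1, hxkey⟩ := key_choice n hn L hLlog3
  have hx2 : x^2 < 1 := by nlinarith
  have h1x2 : 0 < 1 - x^2 := by linarith
  set t := x / b with htdef
  have ht0 : 0 ≤ t := le_of_lt (div_pos hx0 hb)
  have htb : t < 1/b := by
    rw [htdef, div_lt_div_iff₀ hb hb]
    nlinarith
  -- per-coordinate mgf
  have hint : ∀ i, Integrable (fun ω => exp (t * X i ω)) μ := by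
    intro i
    have h1 : Integrable (fun y : ℝ => exp (t * y)) (Measure.map (X i) μ) := by
      rw [hmap i]; exact integrable_exp_laplace hb ht0 htb
    exact (integrable_map_measure ((measurable_id.const_mul t).exp.aestronglyMeasurable) (hX i).aemeasurable).mp h1
  have hmg : ∀ i, mgf (X i) μ t = (1 - x^2)⁻¹ := by
    intro i
    have h2 : mgf (X i) μ t = ∫ y, exp (t * y) ∂(Measure.map (X i) μ) := by
      rw [mgf, integral_map (f := fun y : ℝ => rexp (t*y)) (hX i).aemeasurable (by exact (measurable_id.const_mul t).exp.aestronglyMeasurable)]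
    rw [h2, hmap i, integral_exp_laplace hb ht0 htb]
    congr 1
    have hb' : b ≠ 0 := ne_of_gt hb
    rw [htdef]
    field_simp
  -- mgf of the sum
  have hprod : mgf (∑ i, X i) μ t = ((1 - x^2)⁻¹)^n := by
    rw [hindep.mgf_sum hX Finset.univ]
    simp [hmg]
  have hintS : Integrable (fun ω => exp (t * (∑ i, X i) ω)) μ :=
    hindep.integrable_exp_mul_sum hX (fun i _ => hint i)
  set T := max (Real.sqrt (4 * n * b ^ 2 * L)) ((2 / 3) * b * Real.log (3 * n / δ) * L) with hTdef
  have chern := measure_ge_le_exp_mul_mgf (X := ∑ i, X i) (μ := μ) T ht0 hintS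
  -- T = b * P
  have hMeq : Real.log (3 * n / δ) = L + Real.log n := by
    rw [hLdef, show (3 : ℝ) * n / δ = (3/δ) * n by ring,
      Real.log_mul (ne_of_gt hδ3) (by positivity)]
  have hsq : Real.sqrt (4 * n * b ^ 2 * L) = b * (2 * Real.sqrt (n * L)) := by
    rw [show (4 : ℝ) * n * b^2 * L = (2*b)^2 * (n*L) by ring,
      Real.sqrt_mul (by positivity), Real.sqrt_sq (by positivity)]
    ring
  have hTP : T = b * max (2 * Real.sqrt (n * L)) (2/3 * L * (L + Real.log n)) := by
    rw [hTdef, hsq, hMeq, mul_max_of_nonneg _ _ (le_of_lt hb)]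
    ring_nf
  have htT : t * T = x * max (2 * Real.sqrt (n * L)) (2/3 * L * (L + Real.log n)) := by
    rw [hTP, htdef]
    field_simp
  -- real inequality
  have hreal : exp (-t * T) * ((1 - x^2)⁻¹)^n ≤ δ := by
    have hy : (0:ℝ) < (1 - x^2)⁻¹ := by positivity
    have hpow : ((1 - x^2)⁻¹)^n = exp ((n:ℝ) * Real.log ((1 - x^2)⁻¹)) := by
      rw [Real.exp_nat_mul, Real.exp_log hy]
    rw [hpow, ← Real.exp_add, ← Real.exp_log hδ0]
    apply Real.exp_le_exp.mpr
    have hlogδ : Real.log δ = Real.log 3 - L := by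
      rw [hLdef, Real.log_div (by norm_num) (ne_of_gt hδ0)]
      ring
    rw [hlogδ]
    have : Real.log ((1 - x^2)⁻¹) = Real.log (1 / (1 - x^2)) := by rw [one_div]
    rw [this]
    nlinarith [hxkey, htT]
  -- conclude
  calc μ {ω | T < ∑ i, X i ω}
      ≤ μ {ω | T ≤ (∑ i, X i) ω} := by
        apply measure_mono
        intro ω hω
        simp only [Set.mem_setOf_eq, Finset.sum_apply] at *
        exact le_of_lt hω
    _ = ENNReal.ofReal ((μ {ω | T ≤ (∑ i, X i) ω}).toReal) :=
        (ENNReal.ofReal_toReal (measure_ne_top μ _)).symm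
    _ ≤ ENNReal.ofReal δ := by
        apply ENNReal.ofReal_le_ofReal
        refine le_trans chern ?_
        rw [hprod]
        exact hreal
end
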